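/- arXiv:0812.1729 — 4 statements merged into one kernel-verified Lean document; each statement's English description precedes it below -/
import Mathlib

section
/- Let A be a deterministic parity word automaton over a finite nonempty alphabet Σ in which every state is reachable from q₀, and let ι ∈ {0,1} and κ ≥ ι be natural numbers. Then there exists a deterministic parity word automaton B over Σ with all ranks in {ι, ι+1, …, κ} and L(B) = L(A) if and only if A contains no (ι,κ)‾-flower (that is, no (1,κ+1)-flower when ι = 0, and no (0,κ−1)-flower when ι = 1). -/
open Filter

/-- Parity acceptance: the largest value occurring infinitely often is even. -/
def ParityAccept (f : ℕ → ℕ) : Prop :=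
  Even (sSup {r : ℕ | ∃ᶠ n in atTop, f n = r})

/-- A deterministic parity word automaton over alphabet `Alpha` with state set `Q`. -/
structure DPWA (Alpha : Type) (Q : Type) where
  init : Q
  delta : Q → Alpha → Q
  rank : Q → ℕ

namespace DPWA

variable {Alpha Q : Type}

/-- The state of the run of `M` on `w` after `n` letters. -/
def run (M : DPWA Alpha Q) (w : ℕ → Alpha) : ℕ → Q
  | 0 => M.init
  | n + 1 => M.delta (run M w n) (w n)

/-- The language recognised by `M`. -/
def Lang (M : DPWA Alpha Q) : Set (ℕ → Alpha) :=
  {w | ParityAccept fun n => M.rank (M.run w n)}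

/-- The state reached from `q` following a finite word. -/
def follow (M : DPWA Alpha Q) (q : Q) (steps : List Alpha) : Q :=
  steps.foldl M.delta q

/-- All states visited along a path, the starting state included. -/
def statesOn (M : DPWA Alpha Q) (q : Q) (steps : List Alpha) : List Q :=
  List.scanl M.delta q steps

/-- The largest rank of a state visited along a path. -/
def maxRankOn (M : DPWA Alpha Q) (q : Q) (steps : List Alpha) : ℕ :=
  ((M.statesOn q steps).map M.rank).foldr max 0

/-- `steps` is a loop at `q` (a path of positive length from `q` to `q`). -/
def IsLoop (M : DPWA Alpha Q) (q : Q) (steps : List Alpha) : Prop :=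
  steps ≠ [] ∧ M.follow q steps = q

/-- `M` contains an `(i,k)`-flower. -/
def HasFlower (M : DPWA Alpha Q) (i k : ℕ) : Prop :=
  ∃ (q : Q) (lam : ℕ → List Alpha),
    (∀ j, i ≤ j → j ≤ k → M.IsLoop q (lam j) ∧ M.maxRankOn q (lam j) % 2 = j % 2) ∧
    (∀ j, i ≤ j → j < k → M.maxRankOn q (lam j) < M.maxRankOn q (lam (j + 1)))

/-- `q` is reachable from the initial state. -/
def Reachable (M : DPWA Alpha Q) (q : Q) : Prop :=
  ∃ steps, M.follow M.init steps = q

end DPWA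

/-- Wadge reducibility. -/
def WadgeLE {X Y : Type} [TopologicalSpace X] [TopologicalSpace Y]
    (A : Set X) (B : Set Y) : Prop :=
  ∃ φ : X → Y, Continuous φ ∧ A = φ ⁻¹' B

/-- The alphabet `{i, i+1, …, k}`. -/
def IdxAlpha (i k : ℕ) : Type := {n : ℕ // i ≤ n ∧ n ≤ k}

instance (i k : ℕ) : TopologicalSpace (IdxAlpha i k) := ⊥
instance (i k : ℕ) : DiscreteTopology (IdxAlpha i k) := ⟨rfl⟩

/-- The parity language `L_{(i,k)}`: sequences over `{i,…,k}` whose largest value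
occurring infinitely often is even. -/
def Lidx (i k : ℕ) : Set (ℕ → IdxAlpha i k) :=
  {w | Even (sSup {r : ℕ | ∃ᶠ n in atTop, (w n).1 = r})}


namespace DPWA

variable {Alpha Q : Type}


variable (M : DPWA Alpha Q)

@[simp] lemma follow_nil (q : Q) : M.follow q [] = q := rfl

@[simp] lemma follow_cons (q : Q) (a : Alpha) (l : List Alpha) :
    M.follow q (a :: l) = M.follow (M.delta q a) l := rfl

@[simp] lemma follow_append (q : Q) (s t : List Alpha) :
    M.follow q (s ++ t) = M.follow (M.follow q s) t :=
  List.foldl_append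

@[simp] lemma statesOn_nil (q : Q) : M.statesOn q [] = [q] := rfl

@[simp] lemma statesOn_cons (q : Q) (a : Alpha) (l : List Alpha) :
    M.statesOn q (a :: l) = q :: M.statesOn (M.delta q a) l := List.scanl_cons

lemma statesOn_ne_nil (q : Q) (l : List Alpha) : M.statesOn q l ≠ [] := by
  cases l <;> simp

@[simp] lemma self_mem_statesOn (q : Q) (l : List Alpha) : q ∈ M.statesOn q l := by
  cases l <;> simp

lemma mem_statesOn_iff {x q : Q} {l : List Alpha} :
    x ∈ M.statesOn q l ↔ ∃ b, b ≤ l.length ∧ M.follow q (l.take b) = x := by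
  induction l generalizing q with
  | nil => simp [eq_comm]
  | cons a l ih =>
    simp only [statesOn_cons, List.mem_cons, ih]
    constructor
    · rintro (rfl | ⟨b, hb, hf⟩)
      · exact ⟨0, by simp, rfl⟩
      · exact ⟨b + 1, by simpa using hb, by simpa using hf⟩
    · rintro ⟨b, hb, hf⟩
      cases b with
      | zero => left; exact hf.symm
      | succ b => right; exact ⟨b, by simpa using hb, by simpa using hf⟩

lemma follow_mem_statesOn (q : Q) (l : List Alpha) : M.follow q l ∈ M.statesOn q l :=
  (M.mem_statesOn_iff).2 ⟨l.length, le_rfl, by simp⟩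

lemma mem_statesOn_append {x q : Q} {s t : List Alpha} :
    x ∈ M.statesOn q (s ++ t) ↔ x ∈ M.statesOn q s ∨ x ∈ M.statesOn (M.follow q s) t := by
  induction s generalizing q with
  | nil =>
    simp only [List.nil_append, statesOn_nil, List.mem_singleton, follow_nil]
    constructor
    · intro h; right; exact h
    · rintro (rfl | h); · exact M.self_mem_statesOn _ _
      · exact h
  | cons a s ih =>
    simp only [List.cons_append, statesOn_cons, List.mem_cons, ih, follow_cons]
    tauto

-- foldr max lemmas

lemma le_foldr_max {l : List ℕ} {x : ℕ} (hx : x ∈ l) : x ≤ l.foldr max 0 := by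
  induction l with
  | nil => simp at hx
  | cons a l ih =>
    rcases List.mem_cons.1 hx with rfl | h
    · exact le_max_left _ _
    · exact le_trans (ih h) (le_max_right _ _)

lemma foldr_max_mem {l : List ℕ} (h : l ≠ []) : l.foldr max 0 ∈ l := by
  induction l with
  | nil => simp at h
  | cons a l ih =>
    cases l with
    | nil => simp
    | cons b l' =>
      rcases max_cases a ((b :: l').foldr max 0) with ⟨he, _⟩ | ⟨he, _⟩
      · simp only [List.foldr_cons] at he ⊢
        rw [he]; exact List.mem_cons_self
      · simp only [List.foldr_cons] at he ⊢
        rw [he]; exact List.mem_cons_of_mem _ (ih (by simp))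

lemma foldr_max_eq_sSup {l : List ℕ} (h : l ≠ []) : l.foldr max 0 = sSup {x | x ∈ l} := by
  apply le_antisymm
  · exact le_csSup (Set.Finite.bddAbove l.finite_toSet) (foldr_max_mem h)
  · exact csSup_le (by exact ⟨_, foldr_max_mem h⟩) (fun x hx => le_foldr_max hx)

end DPWA

namespace DPWA

variable {Alpha Q : Type} (M : DPWA Alpha Q)

lemma foldr_map_eq_sSup (rk : Q → ℕ) (l : List Q) (h : l ≠ []) :
    (l.map rk).foldr max 0 = sSup (rk '' {x | x ∈ l}) := by
  rw [foldr_max_eq_sSup (by simpa using h)]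
  congr 1
  ext r
  simp [List.mem_map, Set.mem_image]

lemma maxRankOn_eq_sSup (q : Q) (st : List Alpha) :
    M.maxRankOn q st = sSup (M.rank '' {x | x ∈ M.statesOn q st}) :=
  foldr_map_eq_sSup _ _ (M.statesOn_ne_nil q st)

lemma rank_le_maxRankOn {x q : Q} {st : List Alpha} (hx : x ∈ M.statesOn q st) :
    M.rank x ≤ M.maxRankOn q st :=
  le_foldr_max (List.mem_map.2 ⟨x, hx, rfl⟩)

lemma maxRankOn_mem (q : Q) (st : List Alpha) :
    ∃ x ∈ M.statesOn q st, M.rank x = M.maxRankOn q st := by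
  have h := foldr_max_mem (l := (M.statesOn q st).map M.rank) (by simp [M.statesOn_ne_nil])
  rcases List.mem_map.1 h with ⟨x, hx, he⟩
  exact ⟨x, hx, he⟩

lemma maxRankOn_append (q : Q) (s t : List Alpha) :
    M.maxRankOn q (s ++ t) = max (M.maxRankOn q s) (M.maxRankOn (M.follow q s) t) := by
  rw [maxRankOn_eq_sSup, maxRankOn_eq_sSup, maxRankOn_eq_sSup]
  have hset : {x | x ∈ M.statesOn q (s ++ t)} =
      {x | x ∈ M.statesOn q s} ∪ {x | x ∈ M.statesOn (M.follow q s) t} := by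
    ext x; simpa using M.mem_statesOn_append
  rw [hset, Set.image_union]
  exact csSup_union (Set.Finite.bddAbove ((M.statesOn q s).finite_toSet.image _))
    (⟨M.rank q, ⟨q, M.self_mem_statesOn q s, rfl⟩⟩)
    (Set.Finite.bddAbove ((M.statesOn (M.follow q s) t).finite_toSet.image _))
    (⟨M.rank _, ⟨_, M.self_mem_statesOn _ t, rfl⟩⟩)

lemma loop_rotate {q x : Q} {st : List Alpha} (hl : M.IsLoop q st)
    (hx : x ∈ M.statesOn q st) :
    ∃ st', M.IsLoop x st' ∧ {y | y ∈ M.statesOn x st'} = {y | y ∈ M.statesOn q st} := by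
  rcases M.mem_statesOn_iff.1 hx with ⟨b, hb, hf⟩
  refine ⟨st.drop b ++ st.take b, ⟨?_, ?_⟩, ?_⟩
  · intro h
    apply hl.1
    have hlen := congrArg List.length h
    simp only [List.length_append, List.length_drop, List.length_take, List.length_nil,
      min_eq_left hb] at hlen
    rw [Nat.sub_add_cancel hb] at hlen
    exact List.length_eq_zero_iff.1 hlen
  · have h1 : M.follow x (st.drop b) = q := by
      have : M.follow q (st.take b ++ st.drop b) = q := by
        rw [List.take_append_drop]; exact hl.2
      rw [follow_append, hf] at this; exact this
    rw [follow_append, h1, hf]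
  · have h1 : M.follow x (st.drop b) = q := by
      have : M.follow q (st.take b ++ st.drop b) = q := by
        rw [List.take_append_drop]; exact hl.2
      rw [follow_append, hf] at this; exact this
    ext y
    have e1 : y ∈ M.statesOn x (st.drop b ++ st.take b) ↔
        (y ∈ M.statesOn x (st.drop b) ∨ y ∈ M.statesOn q (st.take b)) := by
      rw [M.mem_statesOn_append, h1]
    have e2 : y ∈ M.statesOn q st ↔
        (y ∈ M.statesOn q (st.take b) ∨ y ∈ M.statesOn x (st.drop b)) := by
      conv_lhs => rw [← List.take_append_drop b st]
      rw [M.mem_statesOn_append, hf]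
    simp only [Set.mem_setOf_eq, e1, e2, or_comm]

end DPWA

namespace DPWA

variable {Alpha Q : Type} (M : DPWA Alpha Q)

def runFrom (M : DPWA Alpha Q) (p : Q) (g : ℕ → Alpha) : ℕ → Q
  | 0 => p
  | n + 1 => M.delta (M.runFrom p g n) (g n)

@[simp] lemma runFrom_zero (p : Q) (g : ℕ → Alpha) : M.runFrom p g 0 = p := rfl

@[simp] lemma runFrom_succ (p : Q) (g : ℕ → Alpha) (n : ℕ) :
    M.runFrom p g (n + 1) = M.delta (M.runFrom p g n) (g n) := rfl

lemma run_eq_runFrom (w : ℕ → Alpha) (n : ℕ) : M.run w n = M.runFrom M.init w n := by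
  induction n with
  | zero => rfl
  | succ n ih => simp [run, ih]

lemma runFrom_add (p : Q) (g : ℕ → Alpha) (m n : ℕ) :
    M.runFrom p g (m + n) = M.runFrom (M.runFrom p g m) (fun j => g (m + j)) n := by
  induction n with
  | zero => rfl
  | succ n ih => simp only [← Nat.add_assoc, runFrom_succ, ih]

lemma runFrom_eq_follow (l : List Alpha) (g : ℕ → Alpha) (p : Q)
    (h : ∀ j (hj : j < l.length), g j = l.get ⟨j, hj⟩) :
    M.runFrom p g l.length = M.follow p l := by
  induction l generalizing g p with
  | nil => rfl
  | cons a l ih =>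
    have : l.length + 1 = 1 + l.length := Nat.add_comm _ _
    rw [List.length_cons, this, runFrom_add]
    have h0 : M.runFrom p g 1 = M.delta p a := by
      simp [h 0 (by simp)]
    rw [h0, follow_cons]
    exact ih _ _ (fun j hj => by rw [Nat.add_comm 1 j]; simpa using h (j + 1) (by simpa using hj))

lemma freq_image [Finite Q] (ρ : ℕ → Q) (rk : Q → ℕ) :
    {r | ∃ᶠ n in atTop, rk (ρ n) = r} = rk '' {s | ∃ᶠ n in atTop, ρ n = s} := by
  ext r
  constructor
  · intro hr
    by_contra hc
    have hall : ∀ s : Q, ∀ᶠ n in atTop, rk s = r → ρ n ≠ s := by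
      intro s
      by_cases hs : rk s = r
      · have : ¬ (∃ᶠ n in atTop, ρ n = s) := by
          intro hf
          exact hc ⟨s, hf, hs⟩
        filter_upwards [not_frequently.1 this] with n hn
        exact fun _ => hn
      · filter_upwards with n hn
        exact absurd hn hs
    have hev : ∀ᶠ n in atTop, ∀ s : Q, rk s = r → ρ n ≠ s :=
      Filter.eventually_all.2 hall
    rcases (hr.and_eventually hev).exists with ⟨n, h1, h2⟩
    exact h2 (ρ n) h1 rfl
  · rintro ⟨s, hs, rfl⟩
    exact hs.mono (fun n hn => by rw [hn])

lemma accept_iff_of_loopset [Finite Q] (w : ℕ → Alpha) (q₀ : Q) (st : List Alpha)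
    (hset : {x | x ∈ M.statesOn q₀ st} = {s | ∃ᶠ n in atTop, M.run w n = s}) (rk : Q → ℕ) :
    (ParityAccept fun n => rk (M.run w n)) ↔
      Even (((M.statesOn q₀ st).map rk).foldr max 0) := by
  unfold ParityAccept
  rw [freq_image, ← hset, foldr_map_eq_sSup rk _ (M.statesOn_ne_nil q₀ st)]

lemma exists_loop_inf [Fintype Q] (w : ℕ → Alpha) :
    ∃ q₀ st, M.IsLoop q₀ st ∧
      {x | x ∈ M.statesOn q₀ st} = {s | ∃ᶠ n in atTop, M.run w n = s} := by
  classical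
  set ρ := M.run w with hρ
  set Inf : Set Q := {s | ∃ᶠ n in atTop, ρ n = s} with hInf
  have hne : Inf.Nonempty := by
    by_contra hc
    rw [Set.not_nonempty_iff_eq_empty] at hc
    have : ∀ s : Q, ∀ᶠ n in atTop, ρ n ≠ s := by
      intro s
      have : s ∉ Inf := by rw [hc]; exact Set.notMem_empty s
      exact not_frequently.1 this
    have h2 : ∀ᶠ n in atTop, ∀ s : Q, ρ n ≠ s := Filter.eventually_all.2 this
    rcases h2.exists with ⟨n, hn⟩
    exact hn (ρ n) rfl
  have hev : ∀ᶠ n in atTop, ρ n ∈ Inf := by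
    have : ∀ᶠ n in atTop, ∀ s : Q, s ∉ Inf → ρ n ≠ s := by
      apply Filter.eventually_all.2
      intro s
      by_cases hs : s ∈ Inf
      · filter_upwards with n hn; exact absurd hs hn
      · filter_upwards [not_frequently.1 hs] with n hn _; exact hn
    filter_upwards [this] with n hn
    by_contra hc
    exact hn (ρ n) hc rfl
  rcases Filter.eventually_atTop.1 hev with ⟨N, hN⟩
  rcases hne with ⟨q₀, hq₀⟩
  rcases Filter.frequently_atTop.1 hq₀ N with ⟨n₀, hn₀N, hn₀⟩
  -- choose visiting times
  have hvis : ∀ s ∈ Inf, ∃ t, n₀ ≤ t ∧ ρ t = s := by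
    intro s hs
    rcases Filter.frequently_atTop.1 hs n₀ with ⟨t, ht, hts⟩
    exact ⟨t, ht, hts⟩
  let g : Q → ℕ := fun s => if h : ∃ t, n₀ ≤ t ∧ ρ t = s then h.choose else 0
  let T := Finset.univ.sup g
  rcases Filter.frequently_atTop.1 hq₀ (max (T + 1) (n₀ + 1)) with ⟨n₁, hn₁, hn₁q⟩
  have hn₁T : T < n₁ := lt_of_lt_of_le (Nat.lt_succ_self T) (le_trans (le_max_left _ _) hn₁)
  have hn₀n₁ : n₀ < n₁ := lt_of_lt_of_le (Nat.lt_succ_self n₀) (le_trans (le_max_right _ _) hn₁)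
  set len := n₁ - n₀ with hlen
  have hlenpos : 0 < len := Nat.sub_pos_of_lt hn₀n₁
  have hagree : ∀ (b : ℕ), b ≤ len → ∀ (j : ℕ)
      (hj : j < ((List.ofFn (fun j : Fin len => w (n₀ + j))).take b).length),
      w (n₀ + j) = ((List.ofFn (fun j : Fin len => w (n₀ + j))).take b).get ⟨j, hj⟩ := by
    intro b hb j hj
    have hj' : j < len := by
      have := hj
      simp only [List.length_take, List.length_ofFn] at this
      omega
    simp [List.get_eq_getElem, List.getElem_take, List.getElem_ofFn]
  have hkey : ∀ b ≤ len, M.follow q₀ ((List.ofFn (fun j : Fin len => w (n₀ + j))).take b)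
      = M.run w (n₀ + b) := by
    intro b hb
    have h1 := M.runFrom_eq_follow ((List.ofFn (fun j : Fin len => w (n₀ + j))).take b)
      (fun j => w (n₀ + j)) q₀ (hagree b hb)
    have hlb : ((List.ofFn (fun j : Fin len => w (n₀ + j))).take b).length = b := by
      simp only [List.length_take, List.length_ofFn]; omega
    rw [hlb] at h1
    rw [← h1, run_eq_runFrom, runFrom_add, ← run_eq_runFrom, ← hρ, hn₀]
  have htake : (List.ofFn (fun j : Fin len => w (n₀ + j))).take len
      = List.ofFn (fun j : Fin len => w (n₀ + j)) := by
    apply List.take_of_length_le; simp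
  refine ⟨q₀, List.ofFn (fun j : Fin len => w (n₀ + j)), ⟨?_, ?_⟩, ?_⟩
  · intro h
    have := congrArg List.length h
    simp at this
    omega
  · have := hkey len le_rfl
    rw [htake] at this
    rw [this, ← hρ]
    have : n₀ + len = n₁ := by omega
    rw [this, hn₁q]
  · ext x
    simp only [Set.mem_setOf_eq, M.mem_statesOn_iff]
    constructor
    · rintro ⟨b, hb, hf⟩
      rw [List.length_ofFn] at hb
      rw [hkey b hb] at hf
      rw [← hf, ← hρ]
      apply hN
      omega
    · intro hx
      have hex : ∃ t, n₀ ≤ t ∧ ρ t = x := hvis x hx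
      have hgx : n₀ ≤ g x ∧ ρ (g x) = x := by
        simp only [g]
        rw [dif_pos hex]
        exact hex.choose_spec
      have htT : g x ≤ T := Finset.le_sup (Finset.mem_univ x)
      obtain ⟨ht, hts⟩ := hgx
      set t := g x
      refine ⟨t - n₀, by simp [List.length_ofFn]; omega, ?_⟩
      rw [hkey (t - n₀) (by omega)]
      have : n₀ + (t - n₀) = t := by omega
      rw [this, ← hρ]
      exact hts

end DPWA

noncomputable def wordOf {Alpha : Type} [Nonempty Alpha] (x wl : List Alpha) : ℕ → Alpha :=
  fun n =>
    if h : n < x.length then x.get ⟨n, h⟩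
    else if h2 : wl.length ≠ 0 then
      wl.get ⟨(n - x.length) % wl.length, Nat.mod_lt _ (Nat.pos_of_ne_zero h2)⟩
    else Classical.arbitrary Alpha

namespace DPWA

variable {Alpha Q : Type} [Nonempty Alpha] (M : DPWA Alpha Q)

lemma inf_of_periodic {x wl : List Alpha} {p : Q}
    (hx : M.follow M.init x = p) (hl : M.IsLoop p wl) :
    {y | y ∈ M.statesOn p wl} = {s | ∃ᶠ n in atTop, M.run (wordOf x wl) n = s} := by
  have hL : 0 < wl.length := List.length_pos_iff.2 hl.1
  set g := wordOf x wl with hg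
  have f1 : ∀ j (hj : j < x.length), g j = x.get ⟨j, hj⟩ := by
    intro j hj; simp only [hg, wordOf, dif_pos hj]
  have f2 : ∀ m, g (x.length + m) = wl.get ⟨m % wl.length, Nat.mod_lt _ hL⟩ := by
    intro m
    simp only [hg, wordOf]
    rw [dif_neg (by omega), dif_pos (by omega)]
    congr 1
    simp
  have hp : M.runFrom M.init g x.length = p := by
    rw [M.runFrom_eq_follow x g M.init f1, hx]
  set g' : ℕ → Alpha := fun m => g (x.length + m) with hg'
  have f3 : ∀ j (hj : j < wl.length), g' j = wl.get ⟨j, hj⟩ := by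
    intro j hj
    simp only [hg', f2 j]
    exact congrArg wl.get (Fin.ext (Nat.mod_eq_of_lt hj))
  have hcyc : M.runFrom p g' wl.length = p := by
    rw [M.runFrom_eq_follow wl g' p (fun j hj => f3 j hj)]
    exact hl.2
  have hshift : (fun j => g' (wl.length + j)) = g' := by
    funext j
    simp only [hg', ← Nat.add_assoc, f2]
    exact congrArg wl.get (Fin.ext (Nat.add_mod_left wl.length j))
  have key : ∀ a b, b ≤ wl.length → M.runFrom p g' (a * wl.length + b) = M.follow p (wl.take b) := by
    intro a
    induction a with
    | zero =>
      intro b hb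
      simp only [Nat.zero_mul, Nat.zero_add]
      rw [← M.runFrom_eq_follow (wl.take b) g' p ?hagr]
      · congr 1
        simp only [List.length_take]
        omega
      · intro j hj
        simp only [List.length_take] at hj
        have hjb : j < b := by omega
        rw [f3 j (by omega)]
        simp [List.get_eq_getElem, List.getElem_take]
    | succ a ih =>
      intro b hb
      have harith : (a + 1) * wl.length + b = wl.length + (a * wl.length + b) := by ring
      rw [harith, M.runFrom_add, hcyc, hshift]
      exact ih b hb
  have hrun : ∀ m, M.run g (x.length + m) = M.runFrom p g' m := by
    intro m
    rw [run_eq_runFrom, runFrom_add, hp]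
  ext y
  simp only [Set.mem_setOf_eq, M.mem_statesOn_iff]
  constructor
  · rintro ⟨b, hb, hf⟩
    rw [Filter.frequently_atTop]
    intro N
    refine ⟨x.length + ((N + 1) * wl.length + b), ?_, ?_⟩
    · have : wl.length ≥ 1 := hL
      nlinarith
    · rw [hrun, key (N + 1) b hb, hf]
  · intro hy
    rcases Filter.frequently_atTop.1 hy x.length with ⟨n, hn, hns⟩
    have hdecomp : n = x.length + ((n - x.length) / wl.length * wl.length + (n - x.length) % wl.length) := by
      have h5 := Nat.div_add_mod (n - x.length) wl.length
      rw [Nat.mul_comm] at h5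
      omega
    refine ⟨(n - x.length) % wl.length, le_of_lt (Nat.mod_lt _ hL), ?_⟩
    rw [← key ((n - x.length) / wl.length) _ (le_of_lt (Nat.mod_lt _ hL)), ← hrun, ← hdecomp, hns]

lemma accept_periodic [Fintype Q] {x wl : List Alpha} {p : Q}
    (hx : M.follow M.init x = p) (hl : M.IsLoop p wl) :
    (wordOf x wl ∈ M.Lang) ↔ Even (M.maxRankOn p wl) :=
  M.accept_iff_of_loopset (wordOf x wl) p wl (M.inf_of_periodic hx hl) M.rank

end DPWA

namespace DPWA

lemma iterate_cycle {T : Type} [Finite T] (f : T → T) (x : T) :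
    ∃ a m, 0 < m ∧ f^[m] (f^[a] x) = f^[a] x := by
  rcases Finite.exists_ne_map_eq_of_infinite (fun n : ℕ => f^[n] x) with ⟨a, b, hne, heq⟩
  rcases Nat.lt_or_ge a b with h | h
  · refine ⟨a, b - a, by omega, ?_⟩
    rw [← Function.iterate_add_apply]
    have : b - a + a = b := by omega
    rw [this, heq]
  · have hba : b < a := by omega
    refine ⟨b, a - b, by omega, ?_⟩
    rw [← Function.iterate_add_apply]
    have : a - b + b = a := by omega
    rw [this, heq]

section Dir1

variable {Alpha Q Q' : Type} [Nonempty Alpha] [Fintype Q] [Fintype Q']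
variable (M : DPWA Alpha Q) (B : DPWA Alpha Q')
variable {q : Q} {ι κ : ℕ} (lam : ℕ → List Alpha)

/-- The word given by a list of flower-loop indices. -/
def wlist (lam : ℕ → List Alpha) (L : List ℕ) : List Alpha := (L.map lam).flatten

lemma wlist_nil : wlist lam ([] : List ℕ) = [] := rfl

lemma wlist_cons (a : ℕ) (L : List ℕ) :
    wlist lam (a :: L) = lam a ++ wlist lam L := by simp [wlist]

lemma wlist_append (L₁ L₂ : List ℕ) :
    wlist lam (L₁ ++ L₂) = wlist lam L₁ ++ wlist lam L₂ := by simp [wlist]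

variable (hfl1 : ∀ j, ι ≤ j → j ≤ κ → M.IsLoop q (lam j) ∧ M.maxRankOn q (lam j) % 2 = j % 2)
variable (hfl2 : ∀ j, ι ≤ j → j < κ → M.maxRankOn q (lam j) < M.maxRankOn q (lam (j + 1)))

include hfl1 in
lemma Mfollow_wlist : ∀ L : List ℕ, (∀ l ∈ L, ι ≤ l ∧ l ≤ κ) → M.follow q (wlist lam L) = q := by
  intro L
  induction L with
  | nil => intro _; rfl
  | cons a L ih =>
    intro h
    rw [wlist_cons, follow_append, (hfl1 a (h a (by simp)).1 (h a (by simp)).2).1.2]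
    exact ih (fun l hl => h l (List.mem_cons_of_mem _ hl))

include hfl1 hfl2 in
lemma Mmono_lam : ∀ a b, ι ≤ a → a ≤ b → b ≤ κ →
    M.maxRankOn q (lam a) ≤ M.maxRankOn q (lam b) := by
  intro a b ha hab hb
  induction b, hab using Nat.le_induction with
  | base => exact le_refl _
  | succ b hab ih =>
    exact le_trans (ih (by omega)) (le_of_lt (hfl2 b (by omega) (by omega)))

include hfl1 in
lemma wlist_ne_nil : ∀ L : List ℕ, L ≠ [] → (∀ l ∈ L, ι ≤ l ∧ l ≤ κ) →
    wlist lam L ≠ [] := by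
  intro L hL h
  cases L with
  | nil => exact absurd rfl hL
  | cons a L =>
    rw [wlist_cons]
    intro hc
    rcases List.append_eq_nil_iff.1 hc with ⟨h1, _⟩
    exact (hfl1 a (h a (by simp)).1 (h a (by simp)).2).1.1 h1

include hfl1 hfl2 in
lemma Mmax_wlist : ∀ (m : ℕ), ι ≤ m → m ≤ κ → ∀ L : List ℕ,
    (∀ l ∈ L, ι ≤ l ∧ l ≤ m) → m ∈ L →
    M.maxRankOn q (wlist lam L) = M.maxRankOn q (lam m) := by
  intro m hιm hmκ
  have hsplit : ∀ (a : ℕ) (L : List ℕ), ι ≤ a → a ≤ κ →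
      M.maxRankOn q (wlist lam (a :: L)) =
        max (M.maxRankOn q (lam a)) (M.maxRankOn q (wlist lam L)) := by
    intro a L ha hk
    rw [wlist_cons, maxRankOn_append, (hfl1 a ha hk).1.2]
  have hle : ∀ L : List ℕ, (∀ l ∈ L, ι ≤ l ∧ l ≤ m) →
      M.maxRankOn q (wlist lam L) ≤ M.maxRankOn q (lam m) := by
    intro L
    induction L with
    | nil =>
      intro _
      have : M.maxRankOn q (wlist lam []) = M.rank q := by
        simp [wlist, maxRankOn, statesOn]
      rw [this]
      exact M.rank_le_maxRankOn (M.self_mem_statesOn q _)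
    | cons a L ih =>
      intro h
      rw [hsplit a L (h a (by simp)).1 (le_trans (h a (by simp)).2 hmκ)]
      exact max_le
        (Mmono_lam M lam hfl1 hfl2 a m (h a (by simp)).1 (h a (by simp)).2 hmκ)
        (ih (fun l hl => h l (List.mem_cons_of_mem _ hl)))
  intro L hall hmem
  refine le_antisymm (hle L hall) ?_
  clear hle
  induction L with
  | nil => simp at hmem
  | cons a L ih =>
    rw [hsplit a L (hall a (by simp)).1 (le_trans (hall a (by simp)).2 hmκ)]
    rcases List.mem_cons.1 hmem with rfl | hm
    · exact le_max_left _ _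
    · exact le_trans (ih (fun l hl => hall l (List.mem_cons_of_mem _ hl)) hm)
        (le_max_right _ _)

end Dir1

end DPWA

namespace DPWA

section Dir1b

variable {Alpha Q Q' : Type} [Nonempty Alpha] [Fintype Q] [Fintype Q']
variable (M : DPWA Alpha Q) (B : DPWA Alpha Q')
variable {q : Q} {ι κ : ℕ} (lam : ℕ → List Alpha)

lemma pump (j : ℕ) (hιj : ι ≤ j) : ∀ x₀ : Q', ∃ p : Q',
    (∃ C : List ℕ, (∀ l ∈ C, ι ≤ l ∧ l ≤ j) ∧ B.follow x₀ (wlist lam C) = p) ∧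
    (∀ l, ι ≤ l → l ≤ j → ∃ L : List ℕ, L ≠ [] ∧ (∀ m ∈ L, ι ≤ m ∧ m ≤ l) ∧ l ∈ L ∧
      B.follow p (wlist lam L) = p) := by
  induction j, hιj using Nat.le_induction with
  | base =>
    intro x₀
    set f : Q' → Q' := fun y => B.follow y (lam ι) with hf
    have hiter : ∀ (n : ℕ) (y : Q'), B.follow y (wlist lam (List.replicate n ι)) = f^[n] y := by
      intro n
      induction n with
      | zero => intro y; rfl
      | succ n ih =>
        intro y
        rw [List.replicate_succ, wlist_cons, follow_append, Function.iterate_succ_apply]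
        exact ih _
    rcases iterate_cycle f x₀ with ⟨a, m, hm, hcy⟩
    refine ⟨f^[a] x₀, ⟨List.replicate a ι, ?_, hiter a x₀⟩, ?_⟩
    · intro l hl
      rcases List.mem_replicate.1 hl with ⟨_, rfl⟩
      exact ⟨le_rfl, le_rfl⟩
    · intro l hl1 hl2
      have : l = ι := le_antisymm hl2 hl1
      subst this
      refine ⟨List.replicate m l, ?_, ?_, ?_, ?_⟩
      · intro h
        have := congrArg List.length h
        simp at this
        omega
      · intro m' hm'
        rcases List.mem_replicate.1 hm' with ⟨_, rfl⟩
        exact ⟨le_rfl, le_rfl⟩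
      · exact List.mem_replicate.2 ⟨by omega, rfl⟩
      · rw [hiter m _]
        exact hcy
  | succ j hj ih =>
    intro x₀
    classical
    -- pick: from any state, move to a state with all loops up to j
    let pick : Q' → Q' := fun y => (ih y).choose
    have pickC : ∀ y, ∃ C : List ℕ, (∀ l ∈ C, ι ≤ l ∧ l ≤ j) ∧
        B.follow y (wlist lam C) = pick y := fun y => (ih y).choose_spec.1
    have pickL : ∀ y, ∀ l, ι ≤ l → l ≤ j → ∃ L : List ℕ, L ≠ [] ∧
        (∀ m ∈ L, ι ≤ m ∧ m ≤ l) ∧ l ∈ L ∧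
        B.follow (pick y) (wlist lam L) = pick y := fun y => (ih y).choose_spec.2
    set Φ : Q' → Q' := fun y => pick (B.follow y (lam (j + 1))) with hΦ
    have step : ∀ y : Q', ∃ D : List ℕ, (∀ l ∈ D, ι ≤ l ∧ l ≤ j + 1) ∧ (j + 1) ∈ D ∧
        B.follow y (wlist lam D) = Φ y := by
      intro y
      rcases pickC (B.follow y (lam (j + 1))) with ⟨C, hC, hCf⟩
      refine ⟨(j + 1) :: C, ?_, by simp, ?_⟩
      · intro l hl
        rcases List.mem_cons.1 hl with rfl | hl
        · exact ⟨le_trans hj (by omega), le_rfl⟩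
        · exact ⟨(hC l hl).1, by have := (hC l hl).2; omega⟩
      · rw [wlist_cons, follow_append]
        exact hCf
    have multi : ∀ (n : ℕ) (y : Q'), ∃ D : List ℕ, (∀ l ∈ D, ι ≤ l ∧ l ≤ j + 1) ∧
        (0 < n → (j + 1) ∈ D) ∧ B.follow y (wlist lam D) = Φ^[n] y := by
      intro n
      induction n with
      | zero => intro y; exact ⟨[], by simp, by simp, rfl⟩
      | succ n ihn =>
        intro y
        rcases step y with ⟨D1, hD1, hD1m, hD1f⟩
        rcases ihn (Φ y) with ⟨D2, hD2, _, hD2f⟩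
        refine ⟨D1 ++ D2, ?_, ?_, ?_⟩
        · intro l hl
          rcases List.mem_append.1 hl with h | h
          · exact hD1 l h
          · exact hD2 l h
        · intro _; exact List.mem_append.2 (Or.inl hD1m)
        · rw [wlist_append, follow_append, hD1f, hD2f, Function.iterate_succ_apply]
    let x₁ := pick x₀
    rcases iterate_cycle Φ x₁ with ⟨a, m, hm, hcy⟩
    set p := Φ^[a] x₁ with hp
    have hppick : ∃ z, p = pick z := by
      cases a with
      | zero => exact ⟨x₀, rfl⟩
      | succ a => exact ⟨_, by rw [hp, Function.iterate_succ_apply']⟩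
    refine ⟨p, ?_, ?_⟩
    · rcases pickC x₀ with ⟨C0, hC0, hC0f⟩
      rcases multi a x₁ with ⟨C1, hC1, _, hC1f⟩
      refine ⟨C0 ++ C1, ?_, ?_⟩
      · intro l hl
        rcases List.mem_append.1 hl with h | h
        · exact ⟨(hC0 l h).1, by have := (hC0 l h).2; omega⟩
        · exact hC1 l h
      · rw [wlist_append, follow_append, hC0f, hC1f]
    · intro l hl1 hl2
      rcases Nat.lt_or_ge l (j + 1) with hlt | hge
      · rcases hppick with ⟨z, hz⟩
        rcases pickL z l hl1 (by omega) with ⟨L, hL1, hL2, hL3, hL4⟩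
        exact ⟨L, hL1, hL2, hL3, by rw [hz]; exact hL4⟩
      · have : l = j + 1 := by omega
        subst this
        rcases multi m p with ⟨D, hD, hDm, hDf⟩
        refine ⟨D, ?_, hD, hDm hm, ?_⟩
        · intro hc
          subst hc
          simp at hDm
          omega
        · rw [hDf, hcy]

end Dir1b

end DPWA

namespace DPWA

section Dir1c

variable {Alpha Q Q' : Type} [Nonempty Alpha] [Fintype Q] [Fintype Q']

lemma flower_ranks (M : DPWA Alpha Q) (B : DPWA Alpha Q') (hlang : B.Lang = M.Lang)
    {q : Q} (hq : M.Reachable q) {ι κ : ℕ} (hικ : ι ≤ κ) (lam : ℕ → List Alpha)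
    (hfl1 : ∀ j, ι ≤ j → j ≤ κ → M.IsLoop q (lam j) ∧ M.maxRankOn q (lam j) % 2 = j % 2)
    (hfl2 : ∀ j, ι ≤ j → j < κ → M.maxRankOn q (lam j) < M.maxRankOn q (lam (j + 1))) :
    ∃ r : ℕ → ℕ,
      (∀ j, ι ≤ j → j ≤ κ → r j % 2 = j % 2 ∧ (∃ y : Q', r j = B.rank y)) ∧
      (∀ j, ι ≤ j → j < κ → r j < r (j + 1)) := by
  classical
  rcases hq with ⟨u, hu⟩
  rcases pump B lam κ hικ (B.follow B.init u) with ⟨p, ⟨C, hC, hCf⟩, hloops⟩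
  set x : List Alpha := u ++ wlist lam C with hx
  have hBx : B.follow B.init x = p := by
    rw [hx, follow_append, hCf]
  have hMx : M.follow M.init x = q := by
    rw [hx, follow_append, hu, Mfollow_wlist M lam hfl1 C hC]
  have haccept : ∀ (L : List ℕ) (m : ℕ), ι ≤ m → m ≤ κ → L ≠ [] →
      (∀ l ∈ L, ι ≤ l ∧ l ≤ m) → m ∈ L → B.follow p (wlist lam L) = p →
      (Even (B.maxRankOn p (wlist lam L)) ↔ Even (M.maxRankOn q (lam m))) := by
    intro L m hm1 hm2 hL hall hmem hfol
    have hrange : ∀ l ∈ L, ι ≤ l ∧ l ≤ κ :=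
      fun l hl => ⟨(hall l hl).1, le_trans (hall l hl).2 hm2⟩
    have hwne : wlist lam L ≠ [] := wlist_ne_nil M lam hfl1 L hL hrange
    have hMloop : M.IsLoop q (wlist lam L) := ⟨hwne, Mfollow_wlist M lam hfl1 L hrange⟩
    have hBloop : B.IsLoop p (wlist lam L) := ⟨hwne, hfol⟩
    have hMacc := M.accept_periodic hMx hMloop
    have hBacc := B.accept_periodic hBx hBloop
    rw [hlang, hMacc] at hBacc
    rw [← hBacc, Mmax_wlist M lam hfl1 hfl2 m hm1 hm2 L hall hmem]
  let Lsel : ℕ → List ℕ := fun l =>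
    if h : ι ≤ l ∧ l ≤ κ then (hloops l h.1 h.2).choose else []
  have hLsel : ∀ l, ι ≤ l → l ≤ κ → (Lsel l ≠ [] ∧ (∀ m ∈ Lsel l, ι ≤ m ∧ m ≤ l) ∧
      l ∈ Lsel l ∧ B.follow p (wlist lam (Lsel l)) = p) := by
    intro l h1 h2
    simp only [Lsel, dif_pos (And.intro h1 h2)]
    exact (hloops l h1 h2).choose_spec
  refine ⟨fun l => B.maxRankOn p (wlist lam (Lsel l)), ?_, ?_⟩
  · intro l h1 h2
    obtain ⟨hne, hall, hmem, hfol⟩ := hLsel l h1 h2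
    constructor
    · show B.maxRankOn p (wlist lam (Lsel l)) % 2 = l % 2
      have h := haccept (Lsel l) l h1 h2 hne hall hmem hfol
      have hp := (hfl1 l h1 h2).2
      simp only [Nat.even_iff] at h
      omega
    · rcases B.maxRankOn_mem p (wlist lam (Lsel l)) with ⟨y, _, hy⟩
      exact ⟨y, hy.symm⟩
  · intro l h1 h2
    show B.maxRankOn p (wlist lam (Lsel l)) < B.maxRankOn p (wlist lam (Lsel (l + 1)))
    obtain ⟨hne, hall, hmem, hfol⟩ := hLsel l h1 (by omega)
    obtain ⟨hne', hall', hmem', hfol'⟩ := hLsel (l + 1) (by omega) h2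
    have hsplit : B.maxRankOn p (wlist lam (Lsel l ++ Lsel (l + 1))) =
        max (B.maxRankOn p (wlist lam (Lsel l))) (B.maxRankOn p (wlist lam (Lsel (l + 1)))) := by
      rw [wlist_append, maxRankOn_append, hfol]
    have hcomb := haccept (Lsel l ++ Lsel (l + 1)) (l + 1) (by omega) h2
      (by intro hc; rcases List.append_eq_nil_iff.1 hc with ⟨hc1, _⟩; exact hne hc1)
      (by
        intro m hm
        rcases List.mem_append.1 hm with h | h
        · exact ⟨(hall m h).1, by have := (hall m h).2; omega⟩
        · exact hall' m h)
      (List.mem_append.2 (Or.inr hmem'))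
      (by rw [wlist_append, follow_append, hfol, hfol'])
    rw [hsplit] at hcomb
    have hpl : (B.maxRankOn p (wlist lam (Lsel l))) % 2 = l % 2 := by
      have h := haccept (Lsel l) l h1 (by omega) hne hall hmem hfol
      have hp := (hfl1 l h1 (by omega)).2
      simp only [Nat.even_iff] at h
      omega
    have hpl' : (B.maxRankOn p (wlist lam (Lsel (l + 1)))) % 2 = (l + 1) % 2 := by
      have h := haccept (Lsel (l + 1)) (l + 1) (by omega) h2 hne' hall' hmem' hfol'
      have hp := (hfl1 (l + 1) (by omega) h2).2
      simp only [Nat.even_iff] at h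
      omega
    have hpc : (max (B.maxRankOn p (wlist lam (Lsel l)))
        (B.maxRankOn p (wlist lam (Lsel (l + 1))))) % 2 = (l + 1) % 2 := by
      have hp := (hfl1 (l + 1) (by omega) h2).2
      simp only [Nat.even_iff] at hcomb
      omega
    rcases le_or_gt (B.maxRankOn p (wlist lam (Lsel (l + 1))))
      (B.maxRankOn p (wlist lam (Lsel l))) with h | h
    · rw [max_eq_left h] at hpc
      omega
    · exact h

end Dir1c

end DPWA

namespace DPWA

section Dir2

variable {Alpha Q : Type} [Fintype Q] (M : DPWA Alpha Q)

def GoodS (S : Set Q) : Prop :=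
  ∃ q st, M.IsLoop q st ∧ {x | x ∈ M.statesOn q st} = S

noncomputable def mv (S : Set Q) : ℕ := sSup (M.rank '' S)

lemma GoodS.nonempty {S : Set Q} (h : M.GoodS S) : S.Nonempty := by
  rcases h with ⟨q, st, _, hset⟩
  exact ⟨q, hset ▸ M.self_mem_statesOn q st⟩

lemma mv_eq_rank {S : Set Q} (h : S.Nonempty) : ∃ x ∈ S, M.rank x = M.mv S := by
  have := Nat.sSup_mem (h.image M.rank) (Set.Finite.bddAbove (S.toFinite.image _))
  rcases this with ⟨x, hx, hr⟩
  exact ⟨x, hx, hr⟩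

lemma rank_le_mv {S : Set Q} {x : Q} (hx : x ∈ S) : M.rank x ≤ M.mv S :=
  le_csSup (Set.Finite.bddAbove (S.toFinite.image _)) ⟨x, hx, rfl⟩

lemma mv_union {S T : Set Q} (hS : S.Nonempty) (hT : T.Nonempty) :
    M.mv (S ∪ T) = max (M.mv S) (M.mv T) := by
  unfold mv
  rw [Set.image_union]
  exact csSup_union (Set.Finite.bddAbove (S.toFinite.image _)) (hS.image _)
    (Set.Finite.bddAbove (T.toFinite.image _)) (hT.image _)

lemma good_union {S T : Set Q} {x : Q} (hS : M.GoodS S) (hT : M.GoodS T)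
    (hxS : x ∈ S) (hxT : x ∈ T) : M.GoodS (S ∪ T) := by
  rcases hS with ⟨q1, st1, hl1, hset1⟩
  rcases hT with ⟨q2, st2, hl2, hset2⟩
  rcases M.loop_rotate hl1 (show x ∈ M.statesOn q1 st1 from by rw [← hset1] at hxS; exact hxS)
    with ⟨st1', hl1', hset1'⟩
  rcases M.loop_rotate hl2 (show x ∈ M.statesOn q2 st2 from by rw [← hset2] at hxT; exact hxT)
    with ⟨st2', hl2', hset2'⟩
  refine ⟨x, st1' ++ st2', ⟨?_, ?_⟩, ?_⟩
  · intro hc; rcases List.append_eq_nil_iff.1 hc with ⟨h1, _⟩; exact hl1'.1 h1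
  · rw [follow_append, hl1'.2, hl2'.2]
  · ext y
    simp only [Set.mem_setOf_eq, M.mem_statesOn_append, hl1'.2]
    rw [show (y ∈ M.statesOn x st1' ∨ y ∈ M.statesOn x st2') ↔
      (y ∈ {z | z ∈ M.statesOn x st1'} ∨ y ∈ {z | z ∈ M.statesOn x st2'}) from Iff.rfl]
    rw [hset1', hset2', hset1, hset2]
    rfl

def IsChn (c : ℕ → Set Q) (t : ℕ) : Prop :=
  0 < t ∧ (∀ j < t, M.GoodS (c j)) ∧
    (∀ j, j + 1 < t → c j ⊆ c (j + 1) ∧ M.mv (c j) < M.mv (c (j + 1)) ∧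
      M.mv (c j) % 2 ≠ M.mv (c (j + 1)) % 2)

lemma chn_parity {c : ℕ → Set Q} {t : ℕ} (h : M.IsChn c t) :
    ∀ j < t, M.mv (c j) % 2 = (M.mv (c 0) + j) % 2 := by
  intro j
  induction j with
  | zero => intro _; simp
  | succ j ih =>
    intro hj
    have h1 := ih (by omega)
    have h2 := (h.2.2 j (by omega)).2.2
    omega

lemma chn_sub {c : ℕ → Set Q} {t : ℕ} (h : M.IsChn c t) :
    ∀ j < t, c 0 ⊆ c j := by
  intro j
  induction j with
  | zero => intro _; exact subset_rfl
  | succ j ih =>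
    intro hj
    exact subset_trans (ih (by omega)) (h.2.2 j (by omega)).1

lemma chn_shift {c : ℕ → Set Q} {t : ℕ} (h : M.IsChn c t) (ht : 2 ≤ t) :
    M.IsChn (fun n => c (n + 1)) (t - 1) := by
  refine ⟨by omega, fun j hj => h.2.1 (j + 1) (by omega), fun j hj => ?_⟩
  exact h.2.2 (j + 1) (by omega)

lemma chn_flower {c : ℕ → Set Q} {t : ℕ} (h : M.IsChn c t) :
    M.HasFlower (M.mv (c 0) % 2) (M.mv (c 0) % 2 + (t - 1)) := by
  classical
  set b := M.mv (c 0) % 2 with hb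
  obtain ⟨q₀, st₀, hl₀, hset₀⟩ := h.2.1 0 h.1
  have hq₀ : q₀ ∈ c 0 := hset₀ ▸ M.self_mem_statesOn q₀ st₀
  have hrot : ∀ j, j < t → ∃ st, M.IsLoop q₀ st ∧ M.maxRankOn q₀ st = M.mv (c j) := by
    intro j hj
    obtain ⟨qj, stj, hlj, hsetj⟩ := h.2.1 j hj
    have hq₀j : q₀ ∈ M.statesOn qj stj := by
      have : q₀ ∈ c j := M.chn_sub h j hj hq₀
      rw [← hsetj] at this
      exact this
    obtain ⟨st', hl', hset'⟩ := M.loop_rotate hlj hq₀j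
    refine ⟨st', hl', ?_⟩
    rw [M.maxRankOn_eq_sSup, hset', hsetj]
    rfl
  set lam : ℕ → List Alpha := fun n => if hn : n - b < t then (hrot _ hn).choose else []
    with hlam
  have hlamspec : ∀ n, (hn : n - b < t) →
      M.IsLoop q₀ (lam n) ∧ M.maxRankOn q₀ (lam n) = M.mv (c (n - b)) := by
    intro n hn
    simp only [hlam, dif_pos hn]
    exact (hrot _ hn).choose_spec
  have ht := h.1
  refine ⟨q₀, lam, ?_, ?_⟩
  · intro j hj1 hj2
    have hd : j - b < t := by omega
    obtain ⟨hl, hmax⟩ := hlamspec j hd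
    refine ⟨hl, ?_⟩
    rw [hmax]
    have := M.chn_parity h (j - b) hd
    omega
  · intro j hj1 hj2
    have hd : j - b < t := by omega
    have hd1 : (j + 1) - b < t := by omega
    obtain ⟨_, hmax⟩ := hlamspec j hd
    obtain ⟨_, hmax1⟩ := hlamspec (j + 1) hd1
    rw [hmax, hmax1]
    have : (j + 1) - b = (j - b) + 1 := by omega
    rw [this]
    exact (h.2.2 (j - b) (by omega)).2.1

lemma flower_trunc {a b ι κ : ℕ} (h : M.HasFlower a b) (hpar : a % 2 = ι % 2)
    (hικ : ι ≤ κ) (hab : a ≤ b) (hlen : κ - ι ≤ b - a) : M.HasFlower ι κ := by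
  rcases h with ⟨q, lam, h1, h2⟩
  refine ⟨q, fun j => lam (j - ι + a), ?_, ?_⟩
  · intro j hj1 hj2
    have hidx1 : a ≤ j - ι + a := by omega
    have hidx2 : j - ι + a ≤ b := by omega
    obtain ⟨hl, hp⟩ := h1 _ hidx1 hidx2
    refine ⟨hl, ?_⟩
    rw [hp]
    omega
  · intro j hj1 hj2
    have heq : j + 1 - ι + a = (j - ι + a) + 1 := by omega
    have h3 := h2 (j - ι + a) (by omega) (by omega)
    simp only [heq]
    exact h3

lemma chn_len_bound {ι κ : ℕ} (hNF : ¬ M.HasFlower ι κ) (hικ : ι ≤ κ)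
    {c : ℕ → Set Q} {t : ℕ} (h : M.IsChn c t) (hpar : M.mv (c 0) % 2 = ι % 2) :
    t ≤ κ - ι := by
  by_contra hc
  apply hNF
  exact M.flower_trunc (M.chn_flower h) (by omega) hικ (by omega) (by omega)

end Dir2

end DPWA

namespace DPWA

section Dir2b

variable {Alpha Q : Type} [Fintype Q] (M : DPWA Alpha Q)

def pbase (i b : ℕ) : ℕ := if b % 2 = 1 then 1 else 2 * i

lemma pbase_parity (i b : ℕ) : pbase i b % 2 = b % 2 := by
  unfold pbase; split_ifs with h <;> omega

lemma pbase_ge {i : ℕ} (hi : i ≤ 1) (b : ℕ) : i ≤ pbase i b := by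
  unfold pbase; split_ifs with h <;> omega

variable (i k : ℕ)

def ValsAt (q : Q) : Set ℕ :=
  {v | v = i ∨ ∃ c t, M.IsChn c t ∧ q ∈ c (t - 1) ∧ M.mv (c (t - 1)) = M.rank q ∧
    v = pbase i (M.mv (c 0)) + (t - 1)}

noncomputable def rank' (q : Q) : ℕ := sSup (M.ValsAt i q)

variable (hi : i ≤ 1) (hik : i ≤ k)
variable (hvb : ∀ (c : ℕ → Set Q) (t : ℕ), M.IsChn c t → pbase i (M.mv (c 0)) + (t - 1) ≤ k)

include hik hvb in
lemma valsAt_bdd : ∀ q, ∀ v ∈ M.ValsAt i q, v ≤ k := by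
  intro q v hv
  rcases hv with rfl | ⟨c, t, hc, _, _, rfl⟩
  · exact hik
  · exact hvb c t hc

include hik hvb in
lemma rank'_mem (q : Q) : M.rank' i q ∈ M.ValsAt i q :=
  Nat.sSup_mem ⟨i, Or.inl rfl⟩ ⟨k, M.valsAt_bdd i k hik hvb q⟩

include hik hvb in
lemma le_rank' (q : Q) {v : ℕ} (hv : v ∈ M.ValsAt i q) : v ≤ M.rank' i q :=
  le_csSup ⟨k, M.valsAt_bdd i k hik hvb q⟩ hv

include hik hvb in
lemma rank'_le (q : Q) : M.rank' i q ≤ k :=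
  csSup_le ⟨i, Or.inl rfl⟩ (M.valsAt_bdd i k hik hvb q)

include hik hvb in
lemma rank'_ge (q : Q) : i ≤ M.rank' i q :=
  M.le_rank' i k hik hvb q (Or.inl rfl)

include hi hik hvb in
lemma key_parity {S : Set Q} (hS : M.GoodS S) :
    sSup (M.rank' i '' S) % 2 = M.mv S % 2 := by
  have hSne : S.Nonempty := hS.nonempty
  have himg : (M.rank' i '' S).Nonempty := hSne.image _
  have hbd : BddAbove (M.rank' i '' S) := Set.Finite.bddAbove (S.toFinite.image _)
  set N := sSup (M.rank' i '' S) with hN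
  obtain ⟨qs, hqsS, hqsN⟩ := Nat.sSup_mem himg hbd
  have hNle : ∀ x ∈ S, M.rank' i x ≤ N := fun x hx => le_csSup hbd ⟨x, hx, rfl⟩
  obtain ⟨qm, hqmS, hqmr⟩ := M.mv_eq_rank hSne
  -- the singleton chain at S gives a lower bound for rank' qm
  have hchain1 : M.IsChn (fun _ => S) 1 := ⟨one_pos, fun _ _ => hS, fun j hj => by omega⟩
  have hv1 : pbase i (M.mv S) + 0 ∈ M.ValsAt i qm :=
    Or.inr ⟨fun _ => S, 1, hchain1, hqmS, hqmr.symm, rfl⟩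
  have hbase_le : pbase i (M.mv S) ≤ N := by
    have := M.le_rank' i k hik hvb qm hv1
    have h2 := hNle qm hqmS
    omega
  rcases M.rank'_mem i k hik hvb qs with hdef | ⟨c, t, hc, hqt, hmvt, hval⟩
  · -- N = i
    rw [hqsN] at hdef
    have hbi : pbase i (M.mv S) = i := le_antisymm (hdef ▸ hbase_le) (pbase_ge hi _)
    unfold pbase at hbi
    split_ifs at hbi with hpar
    · omega
    · omega
  · rw [hqsN] at hval
    have ht := hc.1
    have hNpar : N % 2 = M.mv (c (t - 1)) % 2 := by
      have h1 := M.chn_parity hc (t - 1) (by omega)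
      have h2 := pbase_parity i (M.mv (c 0))
      omega
    by_cases hpar : M.mv (c (t - 1)) % 2 = M.mv S % 2
    · omega
    · exfalso
      have hle : M.mv (c (t - 1)) ≤ M.mv S := hmvt ▸ M.rank_le_mv hqsS
      have hlt : M.mv (c (t - 1)) < M.mv S := lt_of_le_of_ne hle (by omega)
      have hgood_t : M.GoodS (c (t - 1)) := hc.2.1 (t - 1) (by omega)
      have hU : M.GoodS (c (t - 1) ∪ S) := M.good_union hgood_t hS hqt hqsS
      have hmvU : M.mv (c (t - 1) ∪ S) = M.mv S := by
        rw [M.mv_union hgood_t.nonempty hSne]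
        omega
      set c' : ℕ → Set Q := fun n => if n < t then c n else c (t - 1) ∪ S with hc'
      have hchn' : M.IsChn c' (t + 1) := by
        refine ⟨by omega, ?_, ?_⟩
        · intro j hj
          by_cases hjt : j < t
          · simp only [hc', if_pos hjt]; exact hc.2.1 j hjt
          · simp only [hc', if_neg hjt]; exact hU
        · intro j hj
          by_cases hjt : j + 1 < t
          · simp only [hc', if_pos hjt, if_pos (by omega : j < t)]
            exact hc.2.2 j hjt
          · have ht0 := hc.1
            have hjeq : j = t - 1 := by omega
            subst hjeq
            have e1 : c' (t - 1) = c (t - 1) := by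
              simp only [hc', if_pos (by omega : t - 1 < t)]
            have e2 : c' (t - 1 + 1) = c (t - 1) ∪ S := by
              simp only [hc', if_neg (by omega : ¬ (t - 1 + 1 < t))]
            rw [e1, e2]
            exact ⟨Set.subset_union_left, by rw [hmvU]; exact hlt, by rw [hmvU]; omega⟩
      have hv' : pbase i (M.mv (c' 0)) + ((t + 1) - 1) ∈ M.ValsAt i qm := by
        refine Or.inr ⟨c', t + 1, hchn', ?_, ?_, rfl⟩
        · simp only [hc']
          rw [if_neg (by omega : ¬ (t + 1 - 1 < t))]
          exact Set.mem_union_right _ hqmS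
        · simp only [hc']
          rw [if_neg (by omega : ¬ (t + 1 - 1 < t))]
          rw [hmvU, hqmr]
      have hc'0 : c' 0 = c 0 := by simp only [hc', if_pos (by omega : 0 < t)]
      rw [hc'0] at hv'
      have hle' := M.le_rank' i k hik hvb qm hv'
      have h2 := hNle qm hqmS
      omega

end Dir2b

end DPWA

namespace DPWA

section Dir2c

variable {Alpha Q : Type} [Fintype Q]

lemma run_congr (M B : DPWA Alpha Q) (hinit : B.init = M.init) (hdelta : B.delta = M.delta)
    (w : ℕ → Alpha) : ∀ n, B.run w n = M.run w n := by
  intro n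
  induction n with
  | zero => exact hinit
  | succ n ih => simp only [run, ih, hdelta]

lemma reranked (M : DPWA Alpha Q) (i k : ℕ) (hi : i ≤ 1) (hik : i ≤ k)
    (hvb : ∀ (c : ℕ → Set Q) (t : ℕ), M.IsChn c t → pbase i (M.mv (c 0)) + (t - 1) ≤ k) :
    ∃ B : DPWA Alpha Q, (∀ q, i ≤ B.rank q ∧ B.rank q ≤ k) ∧ B.Lang = M.Lang := by
  classical
  set B : DPWA Alpha Q := ⟨M.init, M.delta, M.rank' i⟩ with hB
  refine ⟨B, fun q => ⟨M.rank'_ge i k hik hvb q, M.rank'_le i k hik hvb q⟩, ?_⟩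
  ext w
  obtain ⟨q₀, st, hloop, hset⟩ := M.exists_loop_inf w
  have hrun : (fun n => B.rank (B.run w n)) = fun n => M.rank' i (M.run w n) :=
    funext fun n => by rw [run_congr M B rfl rfl w n]
  have hA := M.accept_iff_of_loopset w q₀ st hset (M.rank' i)
  have hM := M.accept_iff_of_loopset w q₀ st hset M.rank
  have hgood : M.GoodS {x | x ∈ M.statesOn q₀ st} := ⟨q₀, st, hloop, rfl⟩
  have hkey := M.key_parity i k hi hik hvb hgood
  have hmvdef : M.mv {x | x ∈ M.statesOn q₀ st} =
      ((M.statesOn q₀ st).map M.rank).foldr max 0 :=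
    (foldr_map_eq_sSup M.rank _ (M.statesOn_ne_nil q₀ st)).symm
  have hrdef : sSup (M.rank' i '' {x | x ∈ M.statesOn q₀ st}) =
      ((M.statesOn q₀ st).map (M.rank' i)).foldr max 0 :=
    (foldr_map_eq_sSup (M.rank' i) _ (M.statesOn_ne_nil q₀ st)).symm
  simp only [Lang, Set.mem_setOf_eq]
  rw [hrun, hA, hM, ← hmvdef, ← hrdef]
  simp only [Nat.even_iff]
  omega

end Dir2c

end DPWA



/-- Niwiński–Walukiewicz index theorem for deterministic word automata.
A deterministic parity word automaton with all states reachable is equivalent to a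
deterministic `(i,k)`-automaton iff it contains no dual `(i,k)‾`-flower. -/
theorem deterministic_word_index {Alpha Q : Type} [Fintype Alpha] [Nonempty Alpha] [Fintype Q]
    (M : DPWA Alpha Q) (hreach : ∀ q, M.Reachable q) (i k : ℕ) (hi : i ≤ 1) (hik : i ≤ k) :
    (∃ (Q' : Type) (_ : Fintype Q') (B : DPWA Alpha Q'),
        (∀ q : Q', i ≤ B.rank q ∧ B.rank q ≤ k) ∧ B.Lang = M.Lang) ↔
      ¬ M.HasFlower (if i = 0 then 1 else 0) (if i = 0 then k + 1 else k - 1) := by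
  constructor
  · rintro ⟨Q', fQ', B, hrange, hlang⟩ hF
    interval_cases i
    · try simp only [reduceIte] at hF
      try rw [if_neg (by omega : ¬ (1:ℕ) = 0), if_neg (by omega : ¬ (1:ℕ) = 0)] at hF
      rcases hF with ⟨q, lam, hfl1, hfl2⟩
      obtain ⟨r, h1, h2⟩ := DPWA.flower_ranks M B hlang (hreach q)
        (by omega : (1:ℕ) ≤ k + 1) lam hfl1 hfl2
      have hmono : ∀ d, 1 + d ≤ k + 1 → r 1 + d ≤ r (1 + d) := by
        intro d
        induction d with
        | zero => intro _; simp
        | succ d ih =>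
          intro hd
          have ha := h2 (1 + d) (by omega) (by omega)
          have hb := ih (by omega)
          have : 1 + (d + 1) = (1 + d) + 1 := by omega
          rw [this]
          omega
      have hr1 := (h1 1 le_rfl (by omega)).1
      obtain ⟨y, hy⟩ := (h1 (k + 1) (by omega) le_rfl).2
      have hyk := (hrange y).2
      have hm := hmono k (by omega)
      have h1k : 1 + k = k + 1 := by omega
      rw [h1k] at hm
      omega
    · try simp only [reduceIte] at hF
      try rw [if_neg (by omega : ¬ (1:ℕ) = 0), if_neg (by omega : ¬ (1:ℕ) = 0)] at hF
      rcases hF with ⟨q, lam, hfl1, hfl2⟩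
      obtain ⟨r, h1, h2⟩ := DPWA.flower_ranks M B hlang (hreach q)
        (by omega : (0:ℕ) ≤ k - 1) lam hfl1 hfl2
      have hmono : ∀ d, d ≤ k - 1 → r 0 + d ≤ r d := by
        intro d
        induction d with
        | zero => intro _; simp
        | succ d ih =>
          intro hd
          have ha := h2 d (by omega) (by omega)
          have hb := ih (by omega)
          omega
      have hr0 := (h1 0 le_rfl (by omega)).1
      obtain ⟨y0, hy0⟩ := (h1 0 le_rfl (by omega)).2
      have hy0k := (hrange y0).1
      obtain ⟨y, hy⟩ := (h1 (k - 1) (by omega) le_rfl).2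
      have hyk := (hrange y).2
      have hm := hmono (k - 1) le_rfl
      omega
  · intro hNF
    refine ⟨Q, inferInstance, ?_⟩
    interval_cases i
    · try simp only [reduceIte] at hNF
      try rw [if_neg (by omega : ¬ (1:ℕ) = 0), if_neg (by omega : ¬ (1:ℕ) = 0)] at hNF
      have hvb : ∀ (c : ℕ → Set Q) (t : ℕ), M.IsChn c t →
          DPWA.pbase 0 (M.mv (c 0)) + (t - 1) ≤ k := by
        intro c t hc
        have ht := hc.1
        by_cases hp : M.mv (c 0) % 2 = 1
        · have hlen := M.chn_len_bound hNF (by omega : (1:ℕ) ≤ k + 1) hc (by omega)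
          unfold DPWA.pbase
          rw [if_pos hp]
          omega
        · unfold DPWA.pbase
          rw [if_neg hp]
          rcases Nat.lt_or_ge t 2 with h2t | h2t
          · omega
          · have hc' := M.chn_shift hc h2t
            have hpar1 := M.chn_parity hc 1 (by omega)
            have hlen := M.chn_len_bound hNF (by omega : (1:ℕ) ≤ k + 1) hc'
              (by simpa using by omega : M.mv ((fun n => c (n + 1)) 0) % 2 = 1 % 2)
            omega
      obtain ⟨B, hB1, hB2⟩ := M.reranked 0 k (by omega) (by omega) hvb
      exact ⟨B, hB1, hB2⟩
    · try simp only [reduceIte] at hNF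
      try rw [if_neg (by omega : ¬ (1:ℕ) = 0), if_neg (by omega : ¬ (1:ℕ) = 0)] at hNF
      have hvb : ∀ (c : ℕ → Set Q) (t : ℕ), M.IsChn c t →
          DPWA.pbase 1 (M.mv (c 0)) + (t - 1) ≤ k := by
        intro c t hc
        have ht := hc.1
        by_cases hp : M.mv (c 0) % 2 = 1
        · unfold DPWA.pbase
          rw [if_pos hp]
          rcases Nat.lt_or_ge t 2 with h2t | h2t
          · omega
          · have hc' := M.chn_shift hc h2t
            have hpar1 := M.chn_parity hc 1 (by omega)
            have hlen := M.chn_len_bound hNF (by omega : (0:ℕ) ≤ k - 1) hc'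
              (by simpa using by omega : M.mv ((fun n => c (n + 1)) 0) % 2 = 0 % 2)
            omega
        · unfold DPWA.pbase
          rw [if_neg hp]
          have hlen := M.chn_len_bound hNF (by omega : (0:ℕ) ≤ k - 1) hc (by omega)
          omega
      obtain ⟨B, hB1, hB2⟩ := M.reranked 1 k (by omega) (by omega) hvb
      exact ⟨B, hB1, hB2⟩
end

section
/- Let ι, ι' ∈ {0,1}, κ ≥ ι, κ' ≥ ι'. Then L_{(ι,κ)} ≤_W L_{(ι',κ')} if and only if κ − ι < κ' − ι' or (ι,κ) = (ι',κ'). -/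
open Filter

section AuxParity

open Filter

/-- Pigeonhole for frequently: a bounded ℕ-valued function takes some value frequently
    along a frequently-true predicate. -/
lemma freq_pigeon {p : ℕ → Prop} {u : ℕ → ℕ} {K : ℕ} (hu : ∀ n, u n ≤ K)
    (hp : ∃ᶠ n in atTop, p n) : ∃ s ≤ K, ∃ᶠ n in atTop, p n ∧ u n = s := by
  by_contra h
  push_neg at h
  have h' : ∀ s ∈ Set.Iic K, ∀ᶠ n in atTop, ¬(p n ∧ u n = s) := by
    intro s hs
    have := h s hs
    simpa [not_and] using this
  have h2 : ∀ᶠ n in atTop, ∀ s ∈ Set.Iic K, ¬(p n ∧ u n = s) :=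
    (eventually_all_finite (Set.finite_Iic K)).2 h'
  obtain ⟨n, hn, h3⟩ := (hp.and_eventually h2).exists
  exact h3 (u n) (hu n) ⟨hn, rfl⟩

lemma freq_bdd {i k : ℕ} (w : ℕ → IdxAlpha i k) :
    BddAbove {r | ∃ᶠ n in atTop, (w n).1 = r} := by
  refine ⟨k, fun r hr => ?_⟩
  obtain ⟨n, hn⟩ := hr.exists
  exact hn ▸ (w n).2.2

lemma freq_nonempty {i k : ℕ} (w : ℕ → IdxAlpha i k) :
    ∃ r, (i ≤ r ∧ r ≤ k) ∧ ∃ᶠ n in atTop, (w n).1 = r := by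
  obtain ⟨s, hs, hfreq⟩ := freq_pigeon (p := fun _ => True) (u := fun n => (w n).1)
    (fun n => (w n).2.2) ((eventually_const.2 trivial).frequently)
  have hfreq' : ∃ᶠ n in atTop, (w n).1 = s := hfreq.mono (fun n h => h.2)
  obtain ⟨n, hn⟩ := hfreq'.exists
  exact ⟨s, ⟨hn ▸ (w n).2.1, hs⟩, hfreq'⟩

lemma sSup_freq_spec {i k : ℕ} (w : ℕ → IdxAlpha i k) :
    (∃ᶠ n in atTop, (w n).1 = sSup {r | ∃ᶠ n in atTop, (w n).1 = r}) ∧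
      i ≤ sSup {r | ∃ᶠ n in atTop, (w n).1 = r} ∧
      sSup {r | ∃ᶠ n in atTop, (w n).1 = r} ≤ k := by
  obtain ⟨r, _, hr⟩ := freq_nonempty w
  have hmem : sSup {r | ∃ᶠ n in atTop, (w n).1 = r} ∈ {r | ∃ᶠ n in atTop, (w n).1 = r} :=
    Nat.sSup_mem ⟨r, hr⟩ (freq_bdd w)
  obtain ⟨n, hn⟩ := hmem.exists
  exact ⟨hmem, hn ▸ (w n).2.1, hn ▸ (w n).2.2⟩

/-- Behaviour of the `sSup` of frequently-attained values under a letterwise map. -/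
lemma sSup_freq_map {i k i' k' : ℕ} (f : IdxAlpha i k → IdxAlpha i' k') (v : ℕ → ℕ)
    (hf : ∀ a, (f a).1 = v a.1)
    (hv : ∀ s t, i ≤ s → t ≤ k → s ≤ t → v s ≤ v t)
    (w : ℕ → IdxAlpha i k) :
    sSup {r | ∃ᶠ n in atTop, (f (w n)).1 = r} =
      v (sSup {r | ∃ᶠ n in atTop, (w n).1 = r}) := by
  set S := {r | ∃ᶠ n in atTop, (w n).1 = r} with hS
  set M := sSup S with hM
  obtain ⟨hMfreq, hMi, hMk⟩ := sSup_freq_spec w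
  have hvM : ∃ᶠ n in atTop, (f (w n)).1 = v M :=
    hMfreq.mono (fun n h => by rw [hf (w n), h])
  refine le_antisymm (csSup_le ⟨v M, hvM⟩ ?_) (le_csSup (freq_bdd (fun n => f (w n))) hvM)
  intro r hr
  obtain ⟨s, hsK, hfreq⟩ := freq_pigeon (p := fun n => (f (w n)).1 = r)
    (u := fun n => (w n).1) (fun n => (w n).2.2) hr
  obtain ⟨n, hn1, hn2⟩ := hfreq.exists
  have hsS : s ∈ S := hfreq.mono (fun n h => h.2)
  have hsi : i ≤ s := hn2 ▸ (w n).2.1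
  have hrv : r = v s := by rw [← hn1, hf (w n), hn2]
  have hsM : s ≤ M := le_csSup (freq_bdd w) hsS
  exact hrv ▸ hv s M hsi hMk hsM

lemma wadge_cont {i k i' k' : ℕ} (f : IdxAlpha i k → IdxAlpha i' k') :
    Continuous (fun (w : ℕ → IdxAlpha i k) (n : ℕ) => f (w n)) :=
  continuous_pi fun n => continuous_of_discreteTopology.comp (continuous_apply n)

lemma wadge_shift (i k i' k' c : ℕ) (hc : Even c) (h1 : i' ≤ i + c) (h2 : k + c ≤ k') :
    WadgeLE (Lidx i k) (Lidx i' k') := by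
  have hrange : ∀ a : IdxAlpha i k, i' ≤ a.1 + c ∧ a.1 + c ≤ k' := by
    intro a; obtain ⟨u1, u2⟩ := a.2; omega
  set f : IdxAlpha i k → IdxAlpha i' k' := fun a => ⟨a.1 + c, hrange a⟩ with hfdef
  have hmap := sSup_freq_map f (fun s => s + c) (fun a => rfl) (fun s t _ _ h => by (try dsimp only at h); omega)
  refine ⟨fun w n => f (w n), wadge_cont f, ?_⟩
  ext w
  simp only [Lidx, Set.mem_setOf_eq, Set.mem_preimage]
  rw [hmap w, Nat.even_add]
  simp [hc]

lemma wadge_down (d : ℕ) : WadgeLE (Lidx 1 (d + 1)) ((Lidx 0 d)ᶜ) := by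
  have hrange : ∀ a : IdxAlpha 1 (d + 1), 0 ≤ a.1 - 1 ∧ a.1 - 1 ≤ d := by
    intro a; obtain ⟨u1, u2⟩ := a.2; omega
  set f : IdxAlpha 1 (d + 1) → IdxAlpha 0 d := fun a => ⟨a.1 - 1, hrange a⟩ with hfdef
  have hmap := sSup_freq_map f (fun s => s - 1) (fun a => rfl) (fun s t _ _ h => by (try dsimp only at h); omega)
  refine ⟨fun w n => f (w n), wadge_cont f, ?_⟩
  ext w
  simp only [Lidx, Set.mem_setOf_eq, Set.mem_preimage, Set.mem_compl_iff]
  rw [hmap w]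
  obtain ⟨_, hMi, _⟩ := sSup_freq_spec w
  rw [Nat.even_sub hMi]
  simp [Nat.not_even_one]

lemma wadge_up (d : ℕ) : WadgeLE ((Lidx 0 d)ᶜ) (Lidx 1 (d + 1)) := by
  have hrange : ∀ a : IdxAlpha 0 d, 1 ≤ a.1 + 1 ∧ a.1 + 1 ≤ d + 1 := by
    intro a; obtain ⟨u1, u2⟩ := a.2; omega
  set f : IdxAlpha 0 d → IdxAlpha 1 (d + 1) := fun a => ⟨a.1 + 1, hrange a⟩ with hfdef
  have hmap := sSup_freq_map f (fun s => s + 1) (fun a => rfl) (fun s t _ _ h => by (try dsimp only at h); omega)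
  refine ⟨fun w n => f (w n), wadge_cont f, ?_⟩
  ext w
  simp only [Lidx, Set.mem_setOf_eq, Set.mem_preimage, Set.mem_compl_iff]
  rw [hmap w, Nat.even_add_one]

lemma WadgeLE.trans' {X Y Z : Type} [TopologicalSpace X] [TopologicalSpace Y] [TopologicalSpace Z]
    {A : Set X} {B : Set Y} {C : Set Z} (h1 : WadgeLE A B) (h2 : WadgeLE B C) : WadgeLE A C := by
  obtain ⟨φ, hφ, hA⟩ := h1
  obtain ⟨ψ, hψ, hB⟩ := h2
  exact ⟨ψ ∘ φ, hψ.comp hφ, by rw [hA, hB]; rfl⟩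

lemma WadgeLE.compl' {X Y : Type} [TopologicalSpace X] [TopologicalSpace Y]
    {A : Set X} {B : Set Y} (h : WadgeLE A B) : WadgeLE Aᶜ Bᶜ := by
  obtain ⟨φ, hφ, hA⟩ := h
  exact ⟨φ, hφ, by rw [hA]; rfl⟩

end AuxParity
section Diag

open Filter

variable {A : Type} (pad : A) (φ : (ℕ → A) → (ℕ → A))

/-- The prefix `u` forces the `m`-th output letter to be `a`. -/
def DForced (u : List A) (m : ℕ) (a : A) : Prop :=
  ∀ x : ℕ → A, (∀ j < u.length, x j = u.getD j pad) → φ x m = a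

open Classical in
/-- Stagewise construction: at each stage, if the next output letter is forced,
copy it into the input, else pad.  Second component counts copied letters. -/
noncomputable def dstage : ℕ → List A × ℕ
  | 0 => ([], 0)
  | n + 1 =>
    if h : ∃ a, DForced pad φ (dstage n).1 (dstage n).2 a then
      ((dstage n).1 ++ [h.choose], (dstage n).2 + 1)
    else
      ((dstage n).1 ++ [pad], (dstage n).2)

/-- The diagonal word. -/
noncomputable def dw (n : ℕ) : A := ((dstage pad φ (n + 1)).1).getD n pad

lemma dstage_len : ∀ n, (dstage pad φ n).1.length = n := by
  intro n
  induction n with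
  | zero => simp [dstage]
  | succ n ih =>
    rw [dstage]
    split_ifs <;> simp [ih]

lemma dstage_succ_fst (n : ℕ) :
    (dstage pad φ (n + 1)).1 = (dstage pad φ n).1 ++ [dw pad φ n] := by
  have hlen := dstage_len pad φ n
  rw [dw]
  rw [dstage]
  split_ifs with h
  · simp [List.getD, hlen]
  · simp [List.getD, hlen]

lemma dstage_agree : ∀ n j, j < n → (dstage pad φ n).1.getD j pad = dw pad φ j := by
  intro n
  induction n with
  | zero => omega
  | succ n ih =>
    intro j hj
    rw [dstage_succ_fst]
    rcases Nat.lt_or_ge j n with h | h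
    · rw [List.getD_append _ _ _ _ (by rw [dstage_len]; exact h)]
      exact ih j h
    · have hjn : j = n := by omega
      subst hjn
      rw [List.getD_append_right _ _ _ _ (by rw [dstage_len])]
      simp [dstage_len]

lemma dc_succ (n : ℕ) :
    (dstage pad φ (n + 1)).2 = (dstage pad φ n).2 + 1 ∨
      (dstage pad φ (n + 1)).2 = (dstage pad φ n).2 := by
  rw [dstage]; split_ifs <;> simp

lemma dc_mono : Monotone (fun n => (dstage pad φ n).2) := by
  apply monotone_nat_of_le_succ
  intro n
  rcases dc_succ pad φ n with h | h <;> omega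

lemma dc_le (n : ℕ) : (dstage pad φ n).2 ≤ n := by
  induction n with
  | zero => simp [dstage]
  | succ n ih => rcases dc_succ pad φ n with h | h <;> omega

lemma dforced_step {n : ℕ}
    (h : ∃ a, DForced pad φ (dstage pad φ n).1 (dstage pad φ n).2 a) :
    φ (dw pad φ) ((dstage pad φ n).2) = dw pad φ n ∧
      (dstage pad φ (n + 1)).2 = (dstage pad φ n).2 + 1 := by
  have hchoose : dw pad φ n = h.choose := by
    rw [dw, dstage, dif_pos h]
    simp [List.getD, dstage_len]
  constructor
  · rw [hchoose]
    refine h.choose_spec (dw pad φ) ?_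
    intro j hj
    rw [dstage_len] at hj
    exact (dstage_agree pad φ n j hj).symm
  · rw [dstage, dif_pos h]

lemma dunforced_step {n : ℕ}
    (h : ¬ ∃ a, DForced pad φ (dstage pad φ n).1 (dstage pad φ n).2 a) :
    dw pad φ n = pad ∧ (dstage pad φ (n + 1)).2 = (dstage pad φ n).2 := by
  constructor
  · rw [dw, dstage, dif_neg h]
    simp [List.getD, dstage_len]
  · rw [dstage, dif_neg h]

variable [TopologicalSpace A] [DiscreteTopology A]

lemma dexists_cyl (hφ : Continuous φ) (m : ℕ) :
    ∃ N, ∀ x : ℕ → A, (∀ j < N, x j = dw pad φ j) → φ x m = φ (dw pad φ) m := by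
  have hcont : Continuous fun x : ℕ → A => φ x m := (continuous_apply m).comp hφ
  have hopen : IsOpen {x : ℕ → A | φ x m = φ (dw pad φ) m} :=
    hcont.isOpen_preimage {φ (dw pad φ) m} (isOpen_discrete _)
  obtain ⟨I, u, hIu, hsub⟩ := isOpen_pi_iff.1 hopen (dw pad φ) rfl
  refine ⟨I.sup id + 1, fun x hx => ?_⟩
  refine hsub ?_
  intro a ha
  have : a < I.sup id + 1 := Nat.lt_succ_of_le (Finset.le_sup (f := id) ha)
  rw [hx a this]
  exact (hIu a ha).2

lemma dfreq_forced (hφ : Continuous φ) (n₀ : ℕ) :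
    ∃ n ≥ n₀, (dstage pad φ (n + 1)).2 = (dstage pad φ n).2 + 1 := by
  by_contra hcon
  push_neg at hcon
  have hstall : ∀ n ≥ n₀, (dstage pad φ (n + 1)).2 = (dstage pad φ n).2 := by
    intro n hn
    rcases dc_succ pad φ n with h | h
    · exact absurd h (hcon n hn)
    · exact h
  have hconst : ∀ n, n₀ ≤ n → (dstage pad φ n).2 = (dstage pad φ n₀).2 := by
    intro n hn
    induction n, hn using Nat.le_induction with
    | base => rfl
    | succ n hn ih => rw [hstall n hn, ih]
  set m := (dstage pad φ n₀).2 with hm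
  obtain ⟨N, hN⟩ := dexists_cyl pad φ hφ m
  set n := max n₀ N with hn
  have hforced : ∃ a, DForced pad φ (dstage pad φ n).1 (dstage pad φ n).2 a := by
    refine ⟨φ (dw pad φ) m, ?_⟩
    rw [hconst n (le_max_left _ _)]
    intro x hx
    refine hN x ?_
    intro j hj
    have hjn : j < n := lt_of_lt_of_le hj (le_max_right _ _)
    have := hx j (by rw [dstage_len]; exact hjn)
    rw [this, dstage_agree pad φ n j hjn]
  have := (dforced_step pad φ hforced).2
  rw [hstall n (le_max_left _ _)] at this
  omega

lemma dc_unbounded (hφ : Continuous φ) (B : ℕ) :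
    ∃ N, ∀ n ≥ N, B ≤ (dstage pad φ n).2 := by
  induction B with
  | zero => exact ⟨0, fun n _ => Nat.zero_le _⟩
  | succ B ih =>
    obtain ⟨N, hN⟩ := ih
    obtain ⟨n, hn, hstep⟩ := dfreq_forced pad φ hφ N
    refine ⟨n + 1, fun n' hn' => ?_⟩
    have h1 : B ≤ (dstage pad φ n).2 := hN n hn
    have h2 : (dstage pad φ (n + 1)).2 ≤ (dstage pad φ n').2 := dc_mono pad φ hn'
    omega

lemma dcopy (hφ : Continuous φ) (m : ℕ) :
    ∃ n ≥ m, dw pad φ n = φ (dw pad φ) m := by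
  obtain ⟨N, hN⟩ := dc_unbounded pad φ hφ (m + 1)
  have hP : ∃ n, m + 1 ≤ (dstage pad φ n).2 := ⟨N, hN N le_rfl⟩
  have hn1 : m + 1 ≤ (dstage pad φ (Nat.find hP)).2 := Nat.find_spec hP
  have hnz : Nat.find hP ≠ 0 := by
    intro h
    rw [h] at hn1
    simp [dstage] at hn1
  obtain ⟨n₀, hne⟩ : ∃ n₀, Nat.find hP = n₀ + 1 := ⟨Nat.find hP - 1, by omega⟩
  have hn0 : ¬ m + 1 ≤ (dstage pad φ n₀).2 := Nat.find_min hP (by omega)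
  rw [hne] at hn1
  have hforced : ∃ a, DForced pad φ (dstage pad φ n₀).1 (dstage pad φ n₀).2 a := by
    by_contra h
    have := (dunforced_step pad φ h).2
    omega
  obtain ⟨hcopy, hstep⟩ := dforced_step pad φ hforced
  have hcm : (dstage pad φ n₀).2 = m := by omega
  rw [hcm] at hcopy
  exact ⟨n₀, by have := dc_le pad φ n₀; omega, hcopy.symm⟩

lemma dforward (hφ : Continuous φ) (a : A)
    (h : ∃ᶠ m in atTop, φ (dw pad φ) m = a) : ∃ᶠ n in atTop, dw pad φ n = a := by
  rw [frequently_atTop] at h ⊢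
  intro B
  obtain ⟨m, hm, hma⟩ := h B
  obtain ⟨n, hn, hna⟩ := dcopy pad φ hφ m
  exact ⟨n, le_trans hm hn, by rw [hna, hma]⟩

lemma dreverse (hφ : Continuous φ) (a : A) (ha : a ≠ pad)
    (h : ∃ᶠ n in atTop, dw pad φ n = a) : ∃ᶠ m in atTop, φ (dw pad φ) m = a := by
  rw [frequently_atTop] at h ⊢
  intro B
  obtain ⟨N, hN⟩ := dc_unbounded pad φ hφ B
  obtain ⟨n, hn, hna⟩ := h N
  have hforced : ∃ b, DForced pad φ (dstage pad φ n).1 (dstage pad φ n).2 b := by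
    by_contra hc
    obtain ⟨hpad, -⟩ := dunforced_step pad φ hc
    rw [hna] at hpad
    exact ha hpad
  obtain ⟨hcopy, _⟩ := dforced_step pad φ hforced
  exact ⟨(dstage pad φ n).2, hN n hn, by rw [hcopy, hna]⟩

end Diag
section Final

open Filter

lemma no_self_dual (i k : ℕ) (hik : i ≤ k) : ¬ WadgeLE (Lidx i k) ((Lidx i k)ᶜ) := by
  rintro ⟨φ, hc, hred⟩
  set pad : IdxAlpha i k := ⟨i, le_refl i, hik⟩ with hpad
  set w : ℕ → IdxAlpha i k := dw pad φ with hw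
  set S := {r | ∃ᶠ n in atTop, (w n).1 = r} with hS
  set S' := {r | ∃ᶠ n in atTop, (φ w n).1 = r} with hS'
  -- S' ⊆ S via forward copying
  have hsub1 : S' ⊆ S := by
    intro r hr
    obtain ⟨n, hn⟩ := hr.exists
    have hb : i ≤ r ∧ r ≤ k := hn ▸ (φ w n).2
    have hr' : ∃ᶠ m in atTop, φ w m = ⟨r, hb⟩ :=
      hr.mono (fun m h => Subtype.ext h)
    have := dforward pad φ hc ⟨r, hb⟩ hr'
    exact this.mono (fun n h => by rw [hw, h])
  -- S ⊆ S' ∪ {i}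
  have hsub2 : ∀ r ∈ S, r = i ∨ r ∈ S' := by
    intro r hr
    rcases eq_or_ne r i with h | h
    · exact Or.inl h
    · right
      obtain ⟨n, hn⟩ := hr.exists
      have hb : i ≤ r ∧ r ≤ k := hn ▸ (w n).2
      have hr' : ∃ᶠ n in atTop, w n = ⟨r, hb⟩ :=
        hr.mono (fun n hh => Subtype.ext hh)
      have hne : (⟨r, hb⟩ : IdxAlpha i k) ≠ pad := by
        intro hcon
        exact h (congrArg Subtype.val hcon)
      have := dreverse pad φ hc ⟨r, hb⟩ hne hr'
      exact this.mono (fun m hh => by rw [hw, hh])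
  -- the two suprema agree
  obtain ⟨hm1, hm2, hm3⟩ := sSup_freq_spec (fun n => φ w n)
  have hSup : sSup S = sSup S' := by
    refine le_antisymm ?_ ?_
    · refine csSup_le ?_ ?_
      · obtain ⟨r, _, hr⟩ := freq_nonempty w
        exact ⟨r, hr⟩
      · intro r hr
        rcases hsub2 r hr with h | h
        · exact h ▸ le_trans hm2 (le_csSup (freq_bdd (fun n => φ w n)) hm1)
        · exact le_csSup (freq_bdd (fun n => φ w n)) h
    · exact csSup_le ⟨_, hm1⟩ (fun r hr => le_csSup (freq_bdd w) (hsub1 hr))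
  have hmem : w ∈ Lidx i k ↔ φ w ∈ (Lidx i k)ᶜ := by
    constructor
    · intro hx; rw [hred] at hx; exact hx
    · intro hx; rw [hred]; exact hx
  simp only [Lidx, Set.mem_setOf_eq, Set.mem_compl_iff] at hmem
  rw [hSup] at hmem
  tauto

lemma wadge_of_lt (i k i' k' : ℕ) (hi : i ≤ 1) (hik : i ≤ k) (hi' : i' ≤ 1) (hik' : i' ≤ k')
    (h : k - i < k' - i') : WadgeLE (Lidx i k) (Lidx i' k') := by
  rcases Nat.lt_or_ge i i' with hc | hc
  · exact wadge_shift i k i' k' 2 (by decide) (by omega) (by omega)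
  · exact wadge_shift i k i' k' 0 (by decide) (by omega) (by omega)

lemma noRed_eq_diff (i k i' k' : ℕ) (hi : i ≤ 1) (hik : i ≤ k) (hi' : i' ≤ 1) (hik' : i' ≤ k')
    (hd : k - i = k' - i') (hne : i ≠ i') : ¬ WadgeLE (Lidx i k) (Lidx i' k') := by
  intro h
  interval_cases i <;> interval_cases i'
  · exact hne rfl
  · -- i = 0, i' = 1 : k' = k + 1
    have hk' : k' = k + 1 := by omega
    subst hk'
    exact no_self_dual 0 k (Nat.zero_le k) (h.trans' (wadge_down k))
  · -- i = 1, i' = 0 : k = k' + 1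
    have hk : k = k' + 1 := by omega
    subst hk
    have step1 : WadgeLE (Lidx 0 k') ((Lidx 1 (k' + 1))ᶜ) := by
      have := (wadge_up k').compl'
      rwa [compl_compl] at this
    exact no_self_dual 0 k' (Nat.zero_le k') (step1.trans' h.compl')
  · exact hne rfl

end Final

/-- `L_{(i,k)} ≤_W L_{(i',k')}` iff `k - i < k' - i'` or the
indices are equal. -/
theorem parity_languages_order (i k i' k' : ℕ)
    (hi : i ≤ 1) (hik : i ≤ k) (hi' : i' ≤ 1) (hik' : i' ≤ k') :
    WadgeLE (Lidx i k) (Lidx i' k') ↔ (k - i < k' - i' ∨ (i = i' ∧ k = k')) := by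
  constructor
  · intro h
    by_contra hcon
    push_neg at hcon
    obtain ⟨h1, h2⟩ := hcon
    rcases Nat.lt_or_ge (k' - i') (k - i) with hlt | hge
    · -- strictly bigger difference: route through the dual at level k' - i'
      have hred1 : WadgeLE (Lidx (1 - i') ((1 - i') + (k' - i'))) (Lidx i k) :=
        wadge_of_lt _ _ _ _ (by omega) (by omega) hi hik (by omega)
      exact noRed_eq_diff (1 - i') ((1 - i') + (k' - i')) i' k' (by omega) (by omega) hi' hik'
        (by omega) (by omega) (hred1.trans' h)
    · -- equal differences
      have heq : k - i = k' - i' := by omega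
      rcases eq_or_ne i i' with rfl | hne
      · exact h2 rfl (by omega)
      · exact noRed_eq_diff i k i' k' hi hik hi' hik' heq hne h
  · rintro (hlt | ⟨rfl, rfl⟩)
    · exact wadge_of_lt i k i' k' hi hik hi' hik' hlt
    · exact ⟨id, continuous_id, rfl⟩
end

section
/- Let A be a normalized deterministic parity tree automaton over a finite nonempty alphabet Σ. Then L(A) is a closed subset of T_Σ if and only if A contains no weak (1,2)-flower. -/
open Filter

/-- A deterministic parity tree automaton over alphabet `Alpha` with state set `Q`. -/
structure DPTA (Alpha : Type) (Q : Type) where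
  init : Q
  delta : Q → Alpha → Q × Q
  rank : Q → ℕ

namespace DPTA

variable {Alpha Q : Type}

/-- The state reached in one step from `q` reading letter `s` in direction `d`. -/
def next (M : DPTA Alpha Q) (q : Q) (s : Alpha) (d : Bool) : Q :=
  if d then (M.delta q s).2 else (M.delta q s).1

/-- The state of the run started in `q` on the tree `t` at the node `v`
(nodes are words over `{0,1}`, head = first direction from the root). -/
def runFrom (M : DPTA Alpha Q) : Q → (List Bool → Alpha) → List Bool → Q
  | q, _, [] => q
  | q, t, d :: v => runFrom M (M.next q (t []) d) (fun u => t (d :: u)) v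

/-- The state of the (unique) run of `M` on `t` at node `v`. -/
def run (M : DPTA Alpha Q) (t : List Bool → Alpha) (v : List Bool) : Q :=
  runFrom M M.init t v

/-- Parity acceptance: the largest value occurring infinitely often is even. -/
def ParityAccept (f : ℕ → ℕ) : Prop :=
  Even (sSup {r : ℕ | ∃ᶠ n in atTop, f n = r})

/-- The prefix of length `n` of an infinite path. -/
def pref (π : ℕ → Bool) (n : ℕ) : List Bool :=
  List.ofFn fun i : Fin n => π i

/-- The run of `M` on `t` started at state `q` is accepting. -/
def AcceptsFrom (M : DPTA Alpha Q) (q : Q) (t : List Bool → Alpha) : Prop :=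
  ∀ π : ℕ → Bool, ParityAccept fun n => M.rank (runFrom M q t (pref π n))

/-- The language recognised by `M`: trees with accepting run. -/
def Lang (M : DPTA Alpha Q) : Set (List Bool → Alpha) :=
  {t | M.AcceptsFrom M.init t}

/-- The state reached from `q` following a finite sequence of steps
(steps = letter together with direction). -/
def follow (M : DPTA Alpha Q) (q : Q) (steps : List (Alpha × Bool)) : Q :=
  steps.foldl (fun p s => M.next p s.1 s.2) q

/-- All states visited along a path (the starting state included). -/
def statesOn (M : DPTA Alpha Q) (q : Q) (steps : List (Alpha × Bool)) : List Q :=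
  List.scanl (fun p s => M.next p s.1 s.2) q steps

/-- The largest rank of a state visited along a path. -/
def maxRankOn (M : DPTA Alpha Q) (q : Q) (steps : List (Alpha × Bool)) : ℕ :=
  ((M.statesOn q steps).map M.rank).foldr max 0

/-- `steps` forms a loop at `q` (a path of positive length from `q` to `q`). -/
def IsLoop (M : DPTA Alpha Q) (q : Q) (steps : List (Alpha × Bool)) : Prop :=
  steps ≠ [] ∧ M.follow q steps = q

/-- `M` contains an `(i,k)`-flower: loops `lam i, …, lam k` at a common state `q`,
the largest rank on `lam j` has the parity of `j` and increases strictly with `j`. -/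
def HasFlower (M : DPTA Alpha Q) (i k : ℕ) : Prop :=
  ∃ (q : Q) (lam : ℕ → List (Alpha × Bool)),
    (∀ j, i ≤ j → j ≤ k → M.IsLoop q (lam j) ∧ M.maxRankOn q (lam j) % 2 = j % 2) ∧
    (∀ j, i ≤ j → j < k → M.maxRankOn q (lam j) < M.maxRankOn q (lam (j + 1)))

/-- `q` is reachable from the initial state. -/
def Reachable (M : DPTA Alpha Q) (q : Q) : Prop :=
  ∃ steps, M.follow M.init steps = q

/-- `q` is productive: it occurs in some accepting run of `M`. -/
def Productive (M : DPTA Alpha Q) (q : Q) : Prop :=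
  ∃ t ∈ M.Lang, ∃ v, M.run t v = q

/-- The transition from `q` reading `s` is used in some accepting run of `M`. -/
def ProductiveTrans (M : DPTA Alpha Q) (q : Q) (s : Alpha) : Prop :=
  ∃ t ∈ M.Lang, ∃ v, M.run t v = q ∧ t v = s

/-- `q` is all-rejecting: started from `q`, the automaton accepts no tree. -/
def AllRejecting (M : DPTA Alpha Q) (q : Q) : Prop :=
  ∀ t, ¬ M.AcceptsFrom q t

/-- `M` is normalized: every state is reachable, every state is productive except
possibly one all-rejecting state `⊥` with `δ(⊥,σ) = (⊥,⊥)`, and every transition is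
productive or of the form `δ(q,σ) = (⊥,⊥)`. -/
def Normalized (M : DPTA Alpha Q) : Prop :=
  (∀ q, M.Reachable q) ∧
  ∃ bot : Option Q,
    (∀ q, some q ≠ bot → M.Productive q) ∧
    (∀ q, some q = bot → M.AllRejecting q ∧ ∀ s, M.delta q s = (q, q)) ∧
    (∀ q s, M.ProductiveTrans q s ∨
      (some (M.delta q s).1 = bot ∧ some (M.delta q s).2 = bot))

end DPTA


/-- `M` contains a weak `(i,k)`-flower: loops `lam i, …, lam k` such that there is a
path from a state of `lam j` to a state of `lam (j+1)`, and `lam j` is accepting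
iff `j` is even. -/
def HasWeakFlower {Alpha Q : Type} (M : DPTA Alpha Q) (i k : ℕ) : Prop :=
  ∃ (q : ℕ → Q) (lam : ℕ → List (Alpha × Bool)),
    (∀ j, i ≤ j → j ≤ k →
      M.IsLoop (q j) (lam j) ∧ (Even (M.maxRankOn (q j) (lam j)) ↔ Even j)) ∧
    (∀ j, i ≤ j → j < k →
      ∃ s ∈ M.statesOn (q j) (lam j), ∃ s' ∈ M.statesOn (q (j + 1)) (lam (j + 1)),
        ∃ steps, M.follow s steps = s')

/-! ### Auxiliary lemmas -/

set_option linter.unusedSectionVars false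
namespace DPTA

variable {Alpha Q : Type}

/-- The subtree of `t` rooted at `v`. -/
def subt (t : List Bool → Alpha) (v : List Bool) : List Bool → Alpha := fun w => t (v ++ w)

@[simp] lemma subt_nil (t : List Bool → Alpha) : subt t [] = t := rfl

lemma subt_subt (t : List Bool → Alpha) (u v : List Bool) :
    subt (subt t u) v = subt t (u ++ v) := by
  funext w; simp [subt, List.append_assoc]

@[simp] lemma runFrom_nil (M : DPTA Alpha Q) (q : Q) (t : List Bool → Alpha) :
    M.runFrom q t [] = q := rfl

lemma runFrom_cons (M : DPTA Alpha Q) (q : Q) (t : List Bool → Alpha) (d : Bool) (v : List Bool) :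
    M.runFrom q t (d :: v) = M.runFrom (M.next q (t []) d) (subt t [d]) v := rfl

lemma runFrom_append (M : DPTA Alpha Q) (q : Q) (t : List Bool → Alpha) (u v : List Bool) :
    M.runFrom q t (u ++ v) = M.runFrom (M.runFrom q t u) (subt t u) v := by
  induction u generalizing q t with
  | nil => simp
  | cons d u ih =>
      rw [List.cons_append, runFrom_cons, ih, runFrom_cons, subt_subt]
      rfl

lemma runFrom_snoc (M : DPTA Alpha Q) (q : Q) (t : List Bool → Alpha) (v : List Bool) (d : Bool) :
    M.runFrom q t (v ++ [d]) = M.next (M.runFrom q t v) (t v) d := by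
  rw [runFrom_append]
  show M.runFrom _ _ [d] = _
  rw [runFrom_cons, runFrom_nil]
  simp [subt]

@[simp] lemma follow_nil (M : DPTA Alpha Q) (q : Q) : M.follow q [] = q := rfl

lemma follow_cons (M : DPTA Alpha Q) (q : Q) (s : Alpha × Bool) (l : List (Alpha × Bool)) :
    M.follow q (s :: l) = M.follow (M.next q s.1 s.2) l := rfl

lemma follow_append (M : DPTA Alpha Q) (q : Q) (l l' : List (Alpha × Bool)) :
    M.follow q (l ++ l') = M.follow (M.follow q l) l' := List.foldl_append

lemma follow_snoc (M : DPTA Alpha Q) (q : Q) (l : List (Alpha × Bool)) (s : Alpha × Bool) :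
    M.follow q (l ++ [s]) = M.next (M.follow q l) s.1 s.2 := by
  rw [follow_append]; rfl

lemma follow_take_succ (M : DPTA Alpha Q) (q : Q) (l : List (Alpha × Bool)) (k : ℕ)
    (hk : k < l.length) :
    M.follow q (l.take (k+1)) = M.next (M.follow q (l.take k)) (l.get ⟨k, hk⟩).1 (l.get ⟨k, hk⟩).2 := by
  rw [List.take_succ]
  have : l[k]? = some (l.get ⟨k, hk⟩) := by
    simp [List.getElem?_eq_getElem hk]
  rw [this]
  simpa using follow_snoc M q (l.take k) (l.get ⟨k, hk⟩)

/-- the first `n` steps of an infinite step sequence -/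
def stepsOf (σ : ℕ → Alpha × Bool) : ℕ → List (Alpha × Bool)
  | 0 => []
  | n+1 => stepsOf σ n ++ [σ n]

@[simp] lemma stepsOf_zero (σ : ℕ → Alpha × Bool) : stepsOf σ 0 = [] := rfl

lemma stepsOf_succ (σ : ℕ → Alpha × Bool) (n : ℕ) :
    stepsOf σ (n+1) = stepsOf σ n ++ [σ n] := rfl

@[simp] lemma length_stepsOf (σ : ℕ → Alpha × Bool) (n : ℕ) : (stepsOf σ n).length = n := by
  induction n with
  | zero => rfl
  | succ n ih => simp [stepsOf_succ, ih]

lemma stepsOf_cons (σ : ℕ → Alpha × Bool) (n : ℕ) :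
    stepsOf σ (n+1) = σ 0 :: stepsOf (fun i => σ (i+1)) n := by
  induction n with
  | zero => rfl
  | succ n ih => rw [stepsOf_succ, ih, stepsOf_succ, List.cons_append]

lemma stepsOf_congr {σ σ' : ℕ → Alpha × Bool} (n : ℕ) (h : ∀ i < n, σ i = σ' i) :
    stepsOf σ n = stepsOf σ' n := by
  induction n with
  | zero => rfl
  | succ n ih =>
      rw [stepsOf_succ, stepsOf_succ, ih (fun i hi => h i (by omega)), h n (by omega)]

lemma stepsOf_add (σ : ℕ → Alpha × Bool) (a b : ℕ) :
    stepsOf σ (a + b) = stepsOf σ a ++ stepsOf (fun i => σ (a + i)) b := by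
  induction b with
  | zero => simp
  | succ b ih => rw [← Nat.add_assoc, stepsOf_succ, ih, stepsOf_succ, List.append_assoc]

lemma follow_stepsOf_succ (M : DPTA Alpha Q) (q : Q) (σ : ℕ → Alpha × Bool) (n : ℕ) :
    M.follow q (stepsOf σ (n+1)) = M.next (M.follow q (stepsOf σ n)) (σ n).1 (σ n).2 := by
  rw [stepsOf_succ, follow_snoc]

/-! ### prefixes of paths -/

@[simp] lemma pref_zero (π : ℕ → Bool) : pref π 0 = [] := rfl

@[simp] lemma length_pref (π : ℕ → Bool) (n : ℕ) : (pref π n).length = n := by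
  simp [pref]

lemma pref_succ (π : ℕ → Bool) (n : ℕ) : pref π (n+1) = pref π n ++ [π n] := by
  rw [pref, List.ofFn_succ']
  simp [pref, List.concat_eq_append]

lemma pref_cons (π : ℕ → Bool) (n : ℕ) : pref π (n+1) = π 0 :: pref (fun i => π (i+1)) n := by
  rw [pref, List.ofFn_succ]
  rfl

lemma pref_congr {π π' : ℕ → Bool} (n : ℕ) (h : ∀ i < n, π i = π' i) :
    pref π n = pref π' n := by
  induction n with
  | zero => rfl
  | succ n ih => rw [pref_succ, pref_succ, ih (fun i hi => h i (by omega)), h n (by omega)]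

lemma pref_add (π : ℕ → Bool) (a b : ℕ) :
    pref π (a + b) = pref π a ++ pref (fun i => π (a + i)) b := by
  induction b with
  | zero => simp
  | succ b ih => rw [← Nat.add_assoc, pref_succ, ih, pref_succ, List.append_assoc]

lemma pref_take (π : ℕ → Bool) {m n : ℕ} (h : m ≤ n) : (pref π n).take m = pref π m := by
  obtain ⟨k, rfl⟩ : ∃ k, n = m + k := ⟨n - m, by omega⟩
  rw [pref_add, List.take_left' (by simp)]

/-! ### statesOn and maxRankOn -/

lemma statesOn_nil (M : DPTA Alpha Q) (q : Q) : M.statesOn q [] = [q] := rfl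

lemma statesOn_cons (M : DPTA Alpha Q) (q : Q) (s : Alpha × Bool) (l : List (Alpha × Bool)) :
    M.statesOn q (s :: l) = q :: M.statesOn (M.next q s.1 s.2) l := by
  simp [statesOn, List.scanl_cons]

lemma self_mem_statesOn (M : DPTA Alpha Q) (q : Q) (l : List (Alpha × Bool)) :
    q ∈ M.statesOn q l := by
  cases l with
  | nil => rw [statesOn_nil]; exact List.mem_singleton.2 rfl
  | cons s l => rw [statesOn_cons]; exact List.mem_cons_self

lemma mem_statesOn_iff (M : DPTA Alpha Q) (q x : Q) (l : List (Alpha × Bool)) :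
    x ∈ M.statesOn q l ↔ ∃ i ≤ l.length, x = M.follow q (l.take i) := by
  induction l generalizing q with
  | nil =>
      rw [statesOn_nil]
      simp only [List.mem_singleton, List.length_nil]
      constructor
      · rintro rfl; exact ⟨0, le_rfl, rfl⟩
      · rintro ⟨i, hi, rfl⟩; simp
  | cons s l ih =>
      rw [statesOn_cons]
      simp only [List.mem_cons, ih]
      constructor
      · rintro (rfl | ⟨i, hi, rfl⟩)
        · exact ⟨0, by simp, rfl⟩
        · exact ⟨i+1, by simpa using hi, by rw [List.take_succ_cons, follow_cons]⟩
      · rintro ⟨i, hi, rfl⟩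
        cases i with
        | zero => left; rfl
        | succ i =>
            right
            exact ⟨i, by simpa using hi, by rw [List.take_succ_cons, follow_cons]⟩

lemma follow_take_mem_statesOn (M : DPTA Alpha Q) (q : Q) (l : List (Alpha × Bool)) (i : ℕ)
    (hi : i ≤ l.length) : M.follow q (l.take i) ∈ M.statesOn q l :=
  (mem_statesOn_iff M q _ l).2 ⟨i, hi, rfl⟩

lemma statesOn_ne_nil (M : DPTA Alpha Q) (q : Q) (l : List (Alpha × Bool)) :
    M.statesOn q l ≠ [] := by
  cases l with
  | nil => rw [statesOn_nil]; simp
  | cons s l => rw [statesOn_cons]; simp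

/-! ### foldr max -/

lemma le_foldr_max {a : ℕ} {l : List ℕ} (h : a ∈ l) : a ≤ l.foldr max 0 := by
  induction l with
  | nil => simp at h
  | cons b l ih =>
      rcases List.mem_cons.1 h with rfl | h
      · exact le_max_left _ _
      · exact le_trans (ih h) (le_max_right _ _)

lemma foldr_max_le {b : ℕ} {l : List ℕ} (h : ∀ a ∈ l, a ≤ b) : l.foldr max 0 ≤ b := by
  induction l with
  | nil => simp
  | cons c l ih =>
      simp only [List.foldr_cons]
      exact max_le (h c (List.mem_cons_self)) (ih fun a ha => h a (List.mem_cons_of_mem _ ha))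

lemma foldr_max_mem {l : List ℕ} (h : l ≠ []) : l.foldr max 0 ∈ l := by
  induction l with
  | nil => simp at h
  | cons a l ih =>
      cases l with
      | nil => simp
      | cons b l =>
          have heq : (a :: b :: l).foldr max 0 = max a ((b :: l).foldr max 0) := rfl
          rcases le_total a ((b :: l).foldr max 0 : ℕ) with h1 | h1
          · rw [heq, max_eq_right h1]
            exact List.mem_cons_of_mem _ (ih (by simp))
          · rw [heq, max_eq_left h1]
            exact List.mem_cons_self

lemma rank_le_maxRankOn (M : DPTA Alpha Q) {q x : Q} {l : List (Alpha × Bool)}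
    (h : x ∈ M.statesOn q l) : M.rank x ≤ M.maxRankOn q l :=
  le_foldr_max (List.mem_map.2 ⟨x, h, rfl⟩)

lemma exists_rank_eq_maxRankOn (M : DPTA Alpha Q) (q : Q) (l : List (Alpha × Bool)) :
    ∃ x ∈ M.statesOn q l, M.rank x = M.maxRankOn q l := by
  have h : ((M.statesOn q l).map M.rank).foldr max 0 ∈ (M.statesOn q l).map M.rank :=
    foldr_max_mem (by simp [statesOn_ne_nil])
  rcases List.mem_map.1 h with ⟨x, hx, hx'⟩
  exact ⟨x, hx, hx'⟩

lemma maxRankOn_le (M : DPTA Alpha Q) {q : Q} {l : List (Alpha × Bool)} {b : ℕ}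
    (h : ∀ x ∈ M.statesOn q l, M.rank x ≤ b) : M.maxRankOn q l ≤ b := by
  refine foldr_max_le ?_
  intro a ha
  rcases List.mem_map.1 ha with ⟨x, hx, rfl⟩
  exact h x hx

/-! ### the set of infinitely often occurring values -/

/-- The set of values taken infinitely often. -/
def IOSet (f : ℕ → ℕ) : Set ℕ := {r : ℕ | ∃ᶠ n in atTop, f n = r}

lemma parityAccept_iff (f : ℕ → ℕ) : ParityAccept f ↔ Even (sSup (IOSet f)) := Iff.rfl

lemma IOSet_nonempty {f : ℕ → ℕ} {B : ℕ} (hB : ∀ n, f n ≤ B) : (IOSet f).Nonempty := by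
  by_contra h
  rw [Set.not_nonempty_iff_eq_empty] at h
  have h1 : ∀ r ∈ Finset.range (B+1), ∀ᶠ n in atTop, f n ≠ r := by
    intro r _
    have : r ∉ IOSet f := by rw [h]; exact Set.notMem_empty r
    simpa [IOSet, Filter.not_frequently] using this
  have h2 := (Filter.eventually_all_finset (Finset.range (B+1))).2 h1
  rcases h2.exists with ⟨n, hn⟩
  exact hn (f n) (Finset.mem_range.2 (by have := hB n; omega)) rfl

lemma IOSet_bddAbove {f : ℕ → ℕ} {B : ℕ} (hB : ∀ n, f n ≤ B) : BddAbove (IOSet f) := by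
  refine ⟨B, fun r hr => ?_⟩
  rcases hr.exists with ⟨n, hn⟩
  exact hn ▸ hB n

lemma IOSet_shift (f : ℕ → ℕ) (k : ℕ) : IOSet (fun n => f (k + n)) = IOSet f := by
  ext r
  simp only [IOSet, Set.mem_setOf_eq, Filter.frequently_atTop]
  constructor
  · intro h N
    rcases h N with ⟨n, hn, hn'⟩
    exact ⟨k + n, by omega, hn'⟩
  · intro h N
    rcases h (N + k) with ⟨n, hn, hn'⟩
    exact ⟨n - k, by omega, by rw [show k + (n - k) = n by omega]; exact hn'⟩

lemma parityAccept_shift_iff (f : ℕ → ℕ) (k : ℕ) :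
    ParityAccept (fun n => f (k + n)) ↔ ParityAccept f := by
  rw [parityAccept_iff, parityAccept_iff, IOSet_shift]

lemma parityAccept_congr {f g : ℕ → ℕ} (h : ∀ n, f n = g n) :
    ParityAccept f ↔ ParityAccept g := by
  have : f = g := funext h
  rw [this]

/-- for an eventually periodic sequence, the greatest value occurring infinitely often
is the maximum over one period. -/
lemma isGreatest_IOSet_of_eventually_periodic {f : ℕ → ℕ} {p N R : ℕ} (hp : 0 < p)
    (hper : ∀ m, N ≤ m → f (m + p) = f m)
    (hub : ∀ i, i < p → f (N + i) ≤ R) (hmem : ∃ i, i < p ∧ f (N + i) = R) :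
    IsGreatest (IOSet f) R := by
  have key : ∀ i k, f (N + i + k * p) = f (N + i) := by
    intro i k
    induction k with
    | zero => simp
    | succ k ih =>
        have : N + i + (k+1) * p = (N + i + k * p) + p := by ring
        rw [this, hper _ (by omega), ih]
  have reduce : ∀ m, N ≤ m → f m = f (N + (m - N) % p) := by
    intro m
    induction m using Nat.strong_induction_on with
    | _ m ih =>
        intro hm
        by_cases h : m < N + p
        · rw [Nat.mod_eq_of_lt (by omega), show N + (m - N) = m by omega]
        · have h1 : f m = f (m - p) := by
            have := hper (m - p) (by omega)
            rw [show m - p + p = m by omega] at this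
            exact this
          rw [h1, ih (m - p) (by omega) (by omega)]
          congr 2
          have : m - N = (m - p - N) + p := by omega
          rw [this, Nat.add_mod_right]
  constructor
  · rcases hmem with ⟨i, hi, hfi⟩
    show ∃ᶠ n in atTop, f n = R
    rw [Filter.frequently_atTop]
    intro a
    refine ⟨N + i + a * p, by nlinarith [hp], ?_⟩
    rw [key i a, hfi]
  · rintro r hr
    have hr' : ∃ᶠ n in atTop, f n = r := hr
    rcases Filter.frequently_atTop.1 hr' N with ⟨n, hn, hfn⟩
    rw [← hfn, reduce n hn]
    exact hub _ (Nat.mod_lt _ hp)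

/-! ### acceptance along subtrees -/

section FiniteQ
variable [Fintype Q]

lemma rank_le_sup (M : DPTA Alpha Q) (q : Q) : M.rank q ≤ Finset.univ.sup M.rank :=
  Finset.le_sup (Finset.mem_univ q)

end FiniteQ

/-- acceptance from a state propagates to subtrees along the run. -/
lemma acceptsFrom_subt (M : DPTA Alpha Q) {q : Q} {t : List Bool → Alpha}
    (h : M.AcceptsFrom q t) (v : List Bool) :
    M.AcceptsFrom (M.runFrom q t v) (subt t v) := by
  intro π
  classical
  set e := v.length with he
  set π' : ℕ → Bool := fun n => if h : n < v.length then v.get ⟨n, h⟩ else π (n - v.length)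
    with hπ'
  have hpref : pref π' e = v := by
    apply List.ext_getElem
    · simp [he]
    · intro i h1 h2
      simp only [pref, List.getElem_ofFn, hπ']
      rw [dif_pos (by simpa [he] using h2)]
      rfl
  have hshift : (fun i => π' (e + i)) = π := by
    funext i
    simp only [hπ']
    rw [dif_neg (by omega)]
    congr 1
    omega
  have h1 := h π'
  rw [← parityAccept_shift_iff _ e] at h1
  refine (parityAccept_congr ?_).1 h1
  intro n
  rw [pref_add, hpref, hshift, runFrom_append]

lemma productive_acceptsFrom (M : DPTA Alpha Q) {q : Q} (h : M.Productive q) :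
    ∃ u, M.AcceptsFrom q u := by
  rcases h with ⟨t, ht, v, hv⟩
  exact ⟨subt t v, hv ▸ M.acceptsFrom_subt ht v⟩

lemma productiveTrans_acceptsFrom (M : DPTA Alpha Q) {q : Q} {s : Alpha}
    (h : M.ProductiveTrans q s) (d : Bool) :
    ∃ u, M.AcceptsFrom (M.next q s d) u := by
  rcases h with ⟨t, ht, v, hv, hs⟩
  refine ⟨subt t (v ++ [d]), ?_⟩
  have := M.acceptsFrom_subt (q := M.init) ht (v ++ [d])
  rwa [runFrom_snoc, show M.runFrom M.init t v = M.run t v from rfl, hv, hs] at this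

/-! ### runs only depend on labels along the path -/

lemma runFrom_congr_prefix (M : DPTA Alpha Q) (q : Q) {t t' : List Bool → Alpha} :
    ∀ {v : List Bool}, (∀ u, u <+: v → u ≠ v → t u = t' u) →
      M.runFrom q t v = M.runFrom q t' v := by
  intro v
  induction v generalizing q t t' with
  | nil => intro _; rfl
  | cons d v ih =>
      intro h
      rw [runFrom_cons, runFrom_cons, h [] (by simp) (by simp)]
      apply ih
      intro u hu hne
      have : t (d :: u) = t' (d :: u) := by
        refine h (d :: u) ?_ (by simpa using hne)
        exact List.cons_prefix_cons.2 ⟨rfl, hu⟩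
      simpa [subt] using this

lemma prefix_pref {π : ℕ → Bool} {n : ℕ} {u : List Bool} (h : u <+: pref π n) :
    ∃ m ≤ n, u = pref π m := by
  refine ⟨u.length, by simpa using h.length_le, ?_⟩
  have h1 := List.prefix_iff_eq_take.1 h
  rw [pref_take π (by simpa using h.length_le)] at h1
  exact h1

lemma runFrom_congr_pathAgree (M : DPTA Alpha Q) (q : Q) {t t' : List Bool → Alpha}
    {π : ℕ → Bool} {n : ℕ} (h : ∀ m < n, t (pref π m) = t' (pref π m)) :
    M.runFrom q t (pref π n) = M.runFrom q t' (pref π n) := by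
  apply runFrom_congr_prefix
  intro u hu hne
  rcases prefix_pref hu with ⟨m, hm, rfl⟩
  apply h
  rcases lt_or_eq_of_le hm with h1 | rfl
  · exact h1
  · exact absurd rfl hne

/-! ### steps along a path in a tree -/

/-- the steps taken along path `π` in tree `t`. -/
def pathSteps (t : List Bool → Alpha) (π : ℕ → Bool) (n : ℕ) : List (Alpha × Bool) :=
  stepsOf (fun m => (t (pref π m), π m)) n

lemma follow_pathSteps (M : DPTA Alpha Q) (q : Q) (t : List Bool → Alpha) (π : ℕ → Bool)
    (n : ℕ) : M.follow q (pathSteps t π n) = M.runFrom q t (pref π n) := by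
  induction n with
  | zero => rfl
  | succ n ih =>
      rw [pathSteps, stepsOf_succ, follow_snoc, ← pathSteps, ih, pref_succ, runFrom_snoc]

@[simp] lemma length_pathSteps (t : List Bool → Alpha) (π : ℕ → Bool) (n : ℕ) :
    (pathSteps t π n).length = n := length_stepsOf _ _

lemma take_pathSteps (t : List Bool → Alpha) (π : ℕ → Bool) {m n : ℕ} (h : m ≤ n) :
    (pathSteps t π n).take m = pathSteps t π m := by
  obtain ⟨k, rfl⟩ : ∃ k, n = m + k := ⟨n - m, by omega⟩
  rw [pathSteps, stepsOf_add, List.take_left' (by simp [pathSteps])]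
  rfl

/-! ### extraction of loops from a rejected / accepted path -/

lemma exists_loop_along_path [Fintype Q] (M : DPTA Alpha Q) (q : Q) (t : List Bool → Alpha)
    (π : ℕ → Bool) :
    ∃ i j : ℕ, i < j ∧
      M.runFrom q t (pref π i) = M.runFrom q t (pref π j) ∧
      M.follow q (pathSteps t π i) = M.runFrom q t (pref π i) ∧
      M.IsLoop (M.runFrom q t (pref π i)) ((pathSteps t π j).drop i) ∧
      M.maxRankOn (M.runFrom q t (pref π i)) ((pathSteps t π j).drop i) =
        sSup (IOSet (fun n => M.rank (M.runFrom q t (pref π n)))) := by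
  classical
  set g : ℕ → Q := fun n => M.runFrom q t (pref π n) with hg
  set f : ℕ → ℕ := fun n => M.rank (g n) with hf
  set B : ℕ := Finset.univ.sup M.rank with hB
  have hfB : ∀ n, f n ≤ B := fun n => M.rank_le_sup _
  set r : ℕ := sSup (IOSet f) with hr
  have hrmem : r ∈ IOSet f := Nat.sSup_mem (IOSet_nonempty hfB) (IOSet_bddAbove hfB)
  -- eventually all values are ≤ r
  have hevsmall : ∀ᶠ n in atTop, f n ≤ r := by
    have h1 : ∀ v ∈ Finset.Icc (r+1) B, ∀ᶠ n in atTop, f n ≠ v := by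
      intro v hv
      rcases Finset.mem_Icc.1 hv with ⟨hv1, hv2⟩
      have : v ∉ IOSet f := by
        intro hmem
        have := le_csSup (IOSet_bddAbove hfB) hmem
        omega
      simpa [IOSet, Filter.not_frequently] using this
    have h2 := (Filter.eventually_all_finset (Finset.Icc (r+1) B)).2 h1
    filter_upwards [h2] with n hn
    by_contra hc
    exact hn (f n) (Finset.mem_Icc.2 ⟨by omega, hfB n⟩) rfl
  rcases Filter.eventually_atTop.1 hevsmall with ⟨N, hN⟩
  -- the set of positions ≥ N where the value r is attained is infinite
  have hinf : {n | N ≤ n ∧ f n = r}.Infinite := by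
    rw [← Nat.frequently_atTop_iff_infinite]
    exact (Filter.eventually_atTop.2 ⟨N, fun n hn => hn⟩).and_frequently hrmem
  obtain ⟨i, hi, j, hj, hne, hgij⟩ :=
    hinf.exists_ne_map_eq_of_mapsTo (f := g) (Set.mapsTo_univ g _) (Set.finite_univ)
  -- order them
  obtain ⟨i, j, hij, hiN, hir, hjN, hjr, hgij⟩ :
      ∃ i j, i < j ∧ N ≤ i ∧ f i = r ∧ N ≤ j ∧ f j = r ∧ g i = g j := by
    rcases lt_or_gt_of_ne hne with h | h
    · exact ⟨i, j, h, hi.1, hi.2, hj.1, hj.2, hgij⟩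
    · exact ⟨j, i, h, hj.1, hj.2, hi.1, hi.2, hgij.symm⟩
  refine ⟨i, j, hij, hgij, M.follow_pathSteps q t π i, ?_, ?_⟩
  · -- IsLoop
    constructor
    · intro hnil
      have := congrArg List.length hnil
      simp at this
      omega
    · have h1 : pathSteps t π j = pathSteps t π i ++ (pathSteps t π j).drop i := by
        rw [← take_pathSteps t π (le_of_lt hij)]
        exact (List.take_append_drop i _).symm
      have h2 := M.follow_pathSteps q t π j
      rw [h1, follow_append, M.follow_pathSteps q t π i] at h2
      exact h2.trans hgij.symm
  · -- max rank on the loop is r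
    apply le_antisymm
    · apply M.maxRankOn_le
      intro x hx
      rcases (M.mem_statesOn_iff _ _ _).1 hx with ⟨k, hk, rfl⟩
      have hlen : ((pathSteps t π j).drop i).length = j - i := by simp
      have hkji : k ≤ j - i := hlen ▸ hk
      have htake : ((pathSteps t π j).drop i).take k = (pathSteps t π (i+k)).drop i := by
        rw [List.take_drop, ← take_pathSteps t π (show i + k ≤ j by omega)]
      rw [htake]
      have hfol : M.follow (g i) ((pathSteps t π (i+k)).drop i) = g (i+k) := by
        have h1 : pathSteps t π (i+k) = pathSteps t π i ++ (pathSteps t π (i+k)).drop i := by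
          rw [← take_pathSteps t π (show i ≤ i + k by omega)]
          exact (List.take_append_drop i _).symm
        have h2 := M.follow_pathSteps q t π (i+k)
        rw [h1, follow_append, M.follow_pathSteps q t π i] at h2
        exact h2
      rw [hfol]
      exact hN (i+k) (by omega)
    · have : M.rank (g i) ≤ M.maxRankOn (g i) ((pathSteps t π j).drop i) :=
        M.rank_le_maxRankOn (M.self_mem_statesOn _ _)
      rw [show M.rank (g i) = f i from rfl, hir] at this
      exact this

/-! ### no weak flower implies closed -/

lemma mem_lang_of_mem_closure [Fintype Q] [TopologicalSpace Alpha] [DiscreteTopology Alpha]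
    (M : DPTA Alpha Q) (hnf : ¬ HasWeakFlower M 1 2) {t : List Bool → Alpha}
    (ht : t ∈ closure M.Lang) : t ∈ M.Lang := by
  classical
  intro π
  by_contra hpa
  obtain ⟨i, j, hij, hgij, hfol, hloop1, hmax1⟩ := M.exists_loop_along_path M.init t π
  set g : ℕ → Q := fun n => M.runFrom M.init t (pref π n) with hg
  set q₁ : Q := g i with hq₁
  set lam₁ : List (Alpha × Bool) := (pathSteps t π j).drop i with hlam₁
  have hodd1 : ¬ Even (M.maxRankOn q₁ lam₁) := by
    rw [hmax1]
    exact hpa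
  -- a tree in the language agreeing with t along π up to j
  have hopen : IsOpen ((pref π '' Set.Iio j).pi (fun v => {t v})) :=
    isOpen_set_pi ((Set.finite_Iio j).image _) (fun a _ => isOpen_discrete _)
  have hto : t ∈ (pref π '' Set.Iio j).pi (fun v => {t v}) := fun v _ => rfl
  obtain ⟨t', ht'o, ht'L⟩ := (mem_closure_iff.1 ht) _ hopen hto
  have hagree : ∀ m < j, t (pref π m) = t' (pref π m) := by
    intro m hm
    exact (ht'o (pref π m) ⟨m, hm, rfl⟩).symm
  have hrun' : M.runFrom M.init t' (pref π j) = q₁ := by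
    rw [← M.runFrom_congr_pathAgree M.init hagree]
    exact hgij.symm
  -- an accepting subtree from q₁
  have hacc : M.AcceptsFrom q₁ (subt t' (pref π j)) := by
    have := M.acceptsFrom_subt (q := M.init) ht'L (pref π j)
    rwa [hrun'] at this
  set u : List Bool → Alpha := subt t' (pref π j) with hu
  set π₀ : ℕ → Bool := fun _ => false with hπ₀
  obtain ⟨i₂, j₂, hij₂, hgij₂, hfol₂, hloop₂, hmax₂⟩ := M.exists_loop_along_path q₁ u π₀
  set q₂ : Q := M.runFrom q₁ u (pref π₀ i₂) with hq₂
  set lam₂ : List (Alpha × Bool) := (pathSteps u π₀ j₂).drop i₂ with hlam₂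
  have heven2 : Even (M.maxRankOn q₂ lam₂) := by
    rw [hmax₂]
    exact hacc π₀
  -- assemble the weak flower
  apply hnf
  refine ⟨fun n => if n = 1 then q₁ else q₂, fun n => if n = 1 then lam₁ else lam₂, ?_, ?_⟩
  · intro k hk1 hk2
    interval_cases k
    · simpa using ⟨hloop1, by simpa using hodd1⟩
    · simpa using ⟨hloop₂, heven2⟩
  · intro k hk1 hk2
    have hk : k = 1 := by omega
    subst hk
    refine ⟨q₁, by simpa using M.self_mem_statesOn q₁ lam₁,
      q₂, by simpa using M.self_mem_statesOn q₂ lam₂,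
      pathSteps u π₀ i₂, ?_⟩
    rw [hfol₂]

lemma isClosed_of_no_flower [Fintype Q] [TopologicalSpace Alpha] [DiscreteTopology Alpha]
    (M : DPTA Alpha Q) (hnf : ¬ HasWeakFlower M 1 2) : IsClosed M.Lang :=
  isClosed_of_closure_subset (fun _ ht => M.mem_lang_of_mem_closure hnf ht)

/-! ### trees built along a spine -/

section Spine
variable [Nonempty Alpha]
open scoped Classical

/-- an accepting tree from `M.next p s d`, when one exists. -/
noncomputable def fillAt (M : DPTA Alpha Q) (p : Q) (s : Alpha) (d : Bool) :
    List Bool → Alpha :=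
  if h : ∃ u, M.AcceptsFrom (M.next p s d) u then h.choose
  else fun _ => Classical.arbitrary Alpha

lemma fillAt_spec (M : DPTA Alpha Q) (p : Q) (s : Alpha) (d : Bool)
    (h : ∃ u, M.AcceptsFrom (M.next p s d) u) :
    M.AcceptsFrom (M.next p s d) (M.fillAt p s d) := by
  rw [fillAt, dif_pos h]
  exact h.choose_spec

/-- the tree constructed along the spine `σ`, hanging accepting trees off the spine. -/
noncomputable def mkT (M : DPTA Alpha Q) : (ℕ → Alpha × Bool) → Q → List Bool → Alpha
  | σ, _, [] => (σ 0).1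
  | σ, p, d :: v =>
      if d = (σ 0).2 then M.mkT (fun n => σ (n+1)) (M.next p (σ 0).1 d) v
      else M.fillAt p (σ 0).1 d v

/-- the directions of the spine. -/
def dirs (σ : ℕ → Alpha × Bool) : ℕ → Bool := fun n => (σ n).2

lemma mkT_nil (M : DPTA Alpha Q) (σ : ℕ → Alpha × Bool) (p : Q) :
    M.mkT σ p [] = (σ 0).1 := rfl

lemma mkT_cons_spine (M : DPTA Alpha Q) (σ : ℕ → Alpha × Bool) (p : Q) (v : List Bool) :
    M.mkT σ p ((σ 0).2 :: v) = M.mkT (fun n => σ (n+1)) (M.next p (σ 0).1 (σ 0).2) v := by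
  rw [mkT, if_pos rfl]

lemma mkT_cons_off (M : DPTA Alpha Q) (σ : ℕ → Alpha × Bool) (p : Q) (d : Bool)
    (hd : d ≠ (σ 0).2) (v : List Bool) :
    M.mkT σ p (d :: v) = M.fillAt p (σ 0).1 d v := by
  rw [mkT, if_neg hd]

lemma subt_mkT_spine (M : DPTA Alpha Q) (σ : ℕ → Alpha × Bool) (p : Q) :
    subt (M.mkT σ p) [(σ 0).2] = M.mkT (fun n => σ (n+1)) (M.next p (σ 0).1 (σ 0).2) := by
  funext v
  exact M.mkT_cons_spine σ p v

/-- labels on the spine. -/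
lemma mkT_label (M : DPTA Alpha Q) :
    ∀ (n : ℕ) (σ : ℕ → Alpha × Bool) (p : Q), M.mkT σ p (pref (dirs σ) n) = (σ n).1 := by
  intro n
  induction n with
  | zero => intro σ p; rfl
  | succ n ih =>
      intro σ p
      rw [pref_cons, show dirs σ 0 = (σ 0).2 from rfl, mkT_cons_spine]
      have : (fun i => dirs σ (i+1)) = dirs (fun n => σ (n+1)) := rfl
      rw [this, ih]

/-- the run along the spine. -/
lemma mkT_run_spine (M : DPTA Alpha Q) :
    ∀ (n : ℕ) (σ : ℕ → Alpha × Bool) (p : Q),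
      M.runFrom p (M.mkT σ p) (pref (dirs σ) n) = M.follow p (stepsOf σ n) := by
  intro n
  induction n with
  | zero => intro σ p; rfl
  | succ n ih =>
      intro σ p
      rw [pref_cons, runFrom_cons, mkT_nil, show dirs σ 0 = (σ 0).2 from rfl,
        subt_mkT_spine, stepsOf_cons, follow_cons]
      have : (fun i => dirs σ (i+1)) = dirs (fun n => σ (n+1)) := rfl
      rw [this, ih]

/-- subtrees hanging off the spine. -/
lemma mkT_off (M : DPTA Alpha Q) :
    ∀ (n : ℕ) (σ : ℕ → Alpha × Bool) (p : Q) (d : Bool), d ≠ dirs σ n →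
      subt (M.mkT σ p) (pref (dirs σ) n ++ [d]) =
        M.fillAt (M.follow p (stepsOf σ n)) (σ n).1 d := by
  intro n
  induction n with
  | zero =>
      intro σ p d hd
      funext v
      simp only [pref_zero, List.nil_append, subt]
      rw [show [d] ++ v = d :: v from rfl, mkT_cons_off M σ p d hd]
      rfl
  | succ n ih =>
      intro σ p d hd
      rw [pref_cons, show dirs σ 0 = (σ 0).2 from rfl]
      have h1 : ((σ 0).2 :: pref (fun i => dirs σ (i+1)) n) ++ [d]
          = [(σ 0).2] ++ (pref (fun i => dirs σ (i+1)) n ++ [d]) := by simp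
      rw [h1, ← subt_subt, subt_mkT_spine]
      have h2 : (fun i => dirs σ (i+1)) = dirs (fun n => σ (n+1)) := rfl
      rw [h2, ih _ _ _ hd, stepsOf_cons, follow_cons]

/-- agreement of spine trees whose spines agree on an initial segment. -/
lemma mkT_congr (M : DPTA Alpha Q) :
    ∀ (v : List Bool) (n : ℕ) (σ σ' : ℕ → Alpha × Bool) (p : Q), v.length < n →
      (∀ i < n, σ i = σ' i) → M.mkT σ p v = M.mkT σ' p v := by
  intro v
  induction v with
  | nil =>
      intro n σ σ' p hlen h
      rw [mkT_nil, mkT_nil, h 0 (by simpa using hlen)]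
  | cons d v ih =>
      intro n σ σ' p hlen h
      have h0 : σ 0 = σ' 0 := h 0 (by simp at hlen; omega)
      by_cases hd : d = (σ 0).2
      · subst hd
        rw [mkT_cons_spine, h0, mkT_cons_spine]
        rw [← h0]
        exact ih (n-1) _ _ _ (by simp at hlen; omega)
          (fun i hi => h (i+1) (by omega))
      · rw [mkT_cons_off M σ p d hd, mkT_cons_off M σ' p d (h0 ▸ hd), h0]

/-- the run of a spine tree is rejecting if the spine itself is. -/
lemma mkT_not_accepts (M : DPTA Alpha Q) (σ : ℕ → Alpha × Bool) (p : Q)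
    (h : ¬ ParityAccept (fun n => M.rank (M.follow p (stepsOf σ n)))) :
    ¬ M.AcceptsFrom p (M.mkT σ p) := by
  intro hacc
  apply h
  have := hacc (dirs σ)
  refine (parityAccept_congr ?_).1 this
  intro n
  rw [mkT_run_spine]

/-- the spine tree is accepted provided the spine path is accepting and all
off-spine states have accepting trees. -/
lemma mkT_accepts (M : DPTA Alpha Q) (σ : ℕ → Alpha × Bool) (p : Q)
    (hsafe : ∀ n d, d ≠ dirs σ n →
      ∃ u, M.AcceptsFrom (M.next (M.follow p (stepsOf σ n)) (σ n).1 d) u)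
    (hspine : ParityAccept (fun n => M.rank (M.follow p (stepsOf σ n)))) :
    M.AcceptsFrom p (M.mkT σ p) := by
  classical
  intro π
  by_cases hcase : ∀ n, π n = dirs σ n
  · have hπ : π = dirs σ := funext hcase
    subst hπ
    refine (parityAccept_congr ?_).1 hspine
    intro n
    rw [mkT_run_spine]
  · push_neg at hcase
    have hex : ∃ n, π n ≠ dirs σ n := hcase
    set n := Nat.find hex with hn
    have hne : π n ≠ dirs σ n := Nat.find_spec hex
    have hmin : ∀ m < n, π m = dirs σ m := fun m hm => by
      by_contra hc
      exact Nat.find_min hex hm hc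
    -- prefixes of π agree with the spine up to n
    have hprefn : pref π n = pref (dirs σ) n := pref_congr n hmin
    -- the subtree at the deviation point
    set pd : Q := M.follow p (stepsOf σ n) with hpd
    set c : Q := M.next pd (σ n).1 (π n) with hc
    set u : List Bool → Alpha := M.fillAt pd (σ n).1 (π n) with hu
    have haccu : M.AcceptsFrom c u := M.fillAt_spec pd (σ n).1 (π n) (hsafe n (π n) hne)
    -- state and subtree at node pref π (n+1)
    have hrun1 : M.runFrom p (M.mkT σ p) (pref π (n+1)) = c := by
      rw [pref_succ, hprefn, runFrom_snoc, mkT_run_spine, mkT_label]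
    have hsub1 : subt (M.mkT σ p) (pref π (n+1)) = u := by
      rw [pref_succ, hprefn]
      exact M.mkT_off n σ p (π n) hne
    have key : ∀ k, M.runFrom p (M.mkT σ p) (pref π (n+1+k))
        = M.runFrom c u (pref (fun i => π (n+1+i)) k) := by
      intro k
      rw [pref_add, runFrom_append, hrun1, hsub1]
    rw [← parityAccept_shift_iff _ (n+1)]
    refine (parityAccept_congr ?_).2 (haccu (fun i => π (n+1+i)))
    intro k
    rw [key]

end Spine

/-! ### cyclic and concatenated spines -/

section Cyc
variable [Nonempty Alpha]

/-- the cyclic spine obtained from a loop. -/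
noncomputable def cyc (l : List (Alpha × Bool)) : ℕ → Alpha × Bool :=
  fun n => l.getD (n % l.length) (Classical.arbitrary _)

lemma cyc_eq_get (l : List (Alpha × Bool)) (hl : l ≠ []) (n : ℕ) :
    cyc l n = l.get ⟨n % l.length, Nat.mod_lt _ (List.length_pos_iff.2 hl)⟩ := by
  rw [cyc, List.getD_eq_getElem _ _ (Nat.mod_lt _ (List.length_pos_iff.2 hl))]
  rfl

lemma follow_stepsOf_cyc (M : DPTA Alpha Q) (q : Q) (l : List (Alpha × Bool))
    (hl : l ≠ []) (hq : M.follow q l = q) (m : ℕ) :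
    M.follow q (stepsOf (cyc l) m) = M.follow q (l.take (m % l.length)) := by
  have hlen : 0 < l.length := List.length_pos_iff.2 hl
  induction m with
  | zero => simp
  | succ m ih =>
      rw [follow_stepsOf_succ, ih, cyc_eq_get l hl m]
      have hmm : (m+1) % l.length = (m % l.length + 1) % l.length :=
        (Nat.mod_add_mod m l.length 1).symm
      by_cases h : m % l.length + 1 = l.length
      · have h2 : (m+1) % l.length = 0 := by rw [hmm, h, Nat.mod_self]
        rw [h2]
        have h3 := M.follow_take_succ q l (m % l.length) (Nat.mod_lt _ hlen)
        rw [h, List.take_length] at h3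
        rw [← h3, hq]
        simp
      · have h2 : (m+1) % l.length = m % l.length + 1 := by
          rw [hmm]
          exact Nat.mod_eq_of_lt (by have := Nat.mod_lt m hlen; omega)
        rw [h2, M.follow_take_succ q l (m % l.length) (Nat.mod_lt _ hlen)]

/-- a finite prefix followed by an infinite spine. -/
noncomputable def listSpine (l : List (Alpha × Bool)) (σ : ℕ → Alpha × Bool) :
    ℕ → Alpha × Bool :=
  fun n => if h : n < l.length then l.get ⟨n, h⟩ else σ (n - l.length)

lemma stepsOf_listSpine_le (l : List (Alpha × Bool)) (σ : ℕ → Alpha × Bool) :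
    ∀ k, k ≤ l.length → stepsOf (listSpine l σ) k = l.take k := by
  intro k
  induction k with
  | zero => simp
  | succ k ih =>
      intro hk
      rw [stepsOf_succ, ih (by omega), List.take_succ,
        List.getElem?_eq_getElem (by omega : k < l.length)]
      simp only [Option.toList_some]
      congr 1
      rw [listSpine, dif_pos (by omega : k < l.length)]
      rfl

lemma stepsOf_listSpine_add (l : List (Alpha × Bool)) (σ : ℕ → Alpha × Bool) (m : ℕ) :
    stepsOf (listSpine l σ) (l.length + m) = l ++ stepsOf σ m := by
  rw [stepsOf_add, stepsOf_listSpine_le l σ l.length le_rfl, List.take_length]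
  congr 1
  apply stepsOf_congr
  intro i _
  rw [listSpine, dif_neg (by omega)]
  congr 1
  omega

lemma follow_listSpine_add (M : DPTA Alpha Q) (q : Q) (l : List (Alpha × Bool))
    (σ : ℕ → Alpha × Bool) (m : ℕ) :
    M.follow q (stepsOf (listSpine l σ) (l.length + m))
      = M.follow (M.follow q l) (stepsOf σ m) := by
  rw [stepsOf_listSpine_add, follow_append]

end Cyc

/-! ### helper lemmas for the flower construction -/

lemma next_eq_fst_or_snd (M : DPTA Alpha Q) (q : Q) (s : Alpha) (d : Bool) :
    M.next q s d = (M.delta q s).1 ∨ M.next q s d = (M.delta q s).2 := by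
  cases d <;> simp [next]

lemma runFrom_fixed (M : DPTA Alpha Q) {x : Q} (hx : ∀ s d, M.next x s d = x) :
    ∀ (v : List Bool) (t : List Bool → Alpha), M.runFrom x t v = x := by
  intro v
  induction v with
  | nil => intro t; rfl
  | cons d v ih => intro t; rw [runFrom_cons, hx]; exact ih _

lemma follow_fixed (M : DPTA Alpha Q) {x : Q} (hx : ∀ s d, M.next x s d = x) :
    ∀ (l : List (Alpha × Bool)), M.follow x l = x := by
  intro l
  induction l with
  | nil => rfl
  | cons s l ih => rw [follow_cons, hx]; exact ih

lemma parityAccept_const (c : ℕ) : ParityAccept (fun _ => c) ↔ Even c := by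
  have h : {r : ℕ | ∃ᶠ (_ : ℕ) in atTop, c = r} = {c} := by
    ext r
    simp only [Set.mem_setOf_eq, Set.mem_singleton_iff]
    constructor
    · intro h; rcases h.exists with ⟨n, hn⟩; exact hn.symm
    · rintro rfl; exact Filter.frequently_atTop.2 fun a => ⟨a, le_rfl, rfl⟩
  show Even (sSup {r : ℕ | ∃ᶠ (_ : ℕ) in atTop, c = r}) ↔ Even c
  rw [h, csSup_singleton]

/-- a state fixed by all transitions which rejects everything has odd rank. -/
lemma rank_odd_of_allRejecting [Nonempty Alpha] (M : DPTA Alpha Q) {x : Q}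
    (hfix : ∀ s d, M.next x s d = x) (hrej : M.AllRejecting x) : ¬ Even (M.rank x) := by
  intro heven
  apply hrej (fun _ => Classical.arbitrary Alpha)
  intro π
  have : (fun n => M.rank (M.runFrom x (fun _ => Classical.arbitrary Alpha) (pref π n)))
      = fun _ => M.rank x := by
    funext n
    rw [M.runFrom_fixed hfix]
  rw [this, parityAccept_const]
  exact heven

/-- the greatest infinitely often occurring rank of a run eventually cycling
through a loop is the maximal rank on the loop. -/
lemma isGreatest_IOSet_loop [Nonempty Alpha] (M : DPTA Alpha Q) {q : Q}
    {l : List (Alpha × Bool)} (hl : l ≠ []) (hq : M.follow q l = q) (f : ℕ → ℕ) (N : ℕ)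
    (hf : ∀ k, f (N + k) = M.rank (M.follow q (l.take (k % l.length)))) :
    IsGreatest (IOSet f) (M.maxRankOn q l) := by
  have hp : 0 < l.length := List.length_pos_iff.2 hl
  apply isGreatest_IOSet_of_eventually_periodic hp
  · intro m hm
    obtain ⟨k, rfl⟩ := Nat.exists_eq_add_of_le hm
    rw [show N + k + l.length = N + (k + l.length) by ring, hf, hf, Nat.add_mod_right]
  · intro i _
    rw [hf]
    exact M.rank_le_maxRankOn (M.follow_take_mem_statesOn q l _ (le_of_lt (Nat.mod_lt _ hp)))
  · obtain ⟨x, hx, hxr⟩ := M.exists_rank_eq_maxRankOn q l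
    obtain ⟨i₀, hi₀, rfl⟩ := (M.mem_statesOn_iff q _ l).1 hx
    refine ⟨i₀ % l.length, Nat.mod_lt _ hp, ?_⟩
    rw [hf, Nat.mod_eq_of_lt (Nat.mod_lt _ hp)]
    by_cases h : i₀ = l.length
    · subst h
      rw [List.take_length] at hxr
      rw [Nat.mod_self, List.take_zero, follow_nil, ← hxr, hq]
    · rw [Nat.mod_eq_of_lt (by omega)]
      exact hxr

/-! ### the flower implies the language is not closed -/

lemma not_closed_of_flower [Fintype Q] [Nonempty Alpha]
    [TopologicalSpace Alpha] [DiscreteTopology Alpha]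
    (M : DPTA Alpha Q) (hM : M.Normalized) (hf : HasWeakFlower M 1 2) :
    ¬ IsClosed M.Lang := by
  classical
  obtain ⟨hreach, bot, hprod, hbot, htrans⟩ := hM
  obtain ⟨qf, lamf, hloops, hpathsf⟩ := hf
  obtain ⟨hloop1, hpar1⟩ := hloops 1 le_rfl (by omega)
  obtain ⟨hloop2, hpar2⟩ := hloops 2 (by omega) le_rfl
  have hpath := hpathsf 1 le_rfl (by omega)
  norm_num at hpath
  obtain ⟨s, hs, s', hs', mid, hmid⟩ := hpath
  set q₁ : Q := qf 1 with hq₁def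
  set q₂ : Q := qf 2 with hq₂def
  set l1 : List (Alpha × Bool) := lamf 1 with hl1def
  set l2 : List (Alpha × Bool) := lamf 2 with hl2def
  have hodd1 : ¬ Even (M.maxRankOn q₁ l1) := fun h => by
    have := hpar1.1 h
    norm_num at this
  have heven2 : Even (M.maxRankOn q₂ l2) := hpar2.2 (by norm_num)
  obtain ⟨a, ha, hsa⟩ := (M.mem_statesOn_iff _ _ _).1 hs
  obtain ⟨b, hb, hsb⟩ := (M.mem_statesOn_iff _ _ _).1 hs'
  set conn : List (Alpha × Bool) := l1.take a ++ (mid ++ l2.drop b) with hconndef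
  have hconn : M.follow q₁ conn = q₂ := by
    rw [hconndef, follow_append, follow_append, ← hsa, hmid, hsb, ← follow_append,
      List.take_append_drop, hloop2.2]
  -- facts about the rejecting sink
  have hbotfix : ∀ x, some x = bot → ∀ s d, M.next x s d = x := by
    intro x hx s d
    have h := (hbot x hx).2 s
    rcases M.next_eq_fst_or_snd x s d with h2 | h2 <;> rw [h2, h]
  have hbotfollow : ∀ x, some x = bot → ∀ l, M.follow x l = x := fun x hx =>
    M.follow_fixed (hbotfix x hx)
  have hnb2 : some q₂ ≠ bot := by
    intro hbb
    have hmr : M.maxRankOn q₂ l2 = M.rank q₂ := by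
      apply le_antisymm
      · apply M.maxRankOn_le
        intro x hx
        obtain ⟨i, hi, rfl⟩ := (M.mem_statesOn_iff _ _ _).1 hx
        rw [hbotfollow q₂ hbb]
      · exact M.rank_le_maxRankOn (M.self_mem_statesOn _ _)
    rw [hmr] at heven2
    exact M.rank_odd_of_allRejecting (hbotfix q₂ hbb) (hbot q₂ hbb).1 heven2
  -- reach q₁ from the initial state
  obtain ⟨steps₀, hsteps₀⟩ := hreach q₁
  set e : ℕ := steps₀.length with hedef
  set p₁ : ℕ := l1.length with hp₁def
  set p₂ : ℕ := l2.length with hp₂def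
  set c : ℕ := conn.length with hcdef
  have hp₁ : 0 < p₁ := List.length_pos_iff.2 hloop1.1
  have hp₂ : 0 < p₂ := List.length_pos_iff.2 hloop2.1
  -- the spines
  set τ : ℕ → Alpha × Bool := listSpine conn (cyc l2) with hτ
  set σI : ℕ → Alpha × Bool := listSpine steps₀ (cyc l1) with hσI
  set σN : ℕ → ℕ → Alpha × Bool :=
    fun n i => if i < e + n * p₁ then σI i else τ (i - (e + n * p₁)) with hσN
  -- basic spine computations
  have hBI : ∀ i, M.follow M.init (stepsOf σI (e + i))
      = M.follow q₁ (l1.take (i % p₁)) := by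
    intro i
    rw [hσI, hedef, follow_listSpine_add, hsteps₀,
      M.follow_stepsOf_cyc q₁ l1 hloop1.1 hloop1.2]
  have hstepsagree : ∀ n m, m ≤ e + n * p₁ → stepsOf (σN n) m = stepsOf σI m := by
    intro n m hm
    apply stepsOf_congr
    intro i hi
    simp only [hσN]
    rw [if_pos (by omega)]
  have hq₁pt : ∀ n, M.follow M.init (stepsOf (σN n) (e + n * p₁)) = q₁ := by
    intro n
    rw [hstepsagree n _ le_rfl, show e + n * p₁ = e + n * p₁ from rfl, hBI,
      Nat.mul_mod_left, List.take_zero, follow_nil]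
  have hEn : ∀ n m, M.follow M.init (stepsOf (σN n) ((e + n * p₁) + m))
      = M.follow q₁ (stepsOf τ m) := by
    intro n m
    rw [stepsOf_add, follow_append, hq₁pt]
    congr 1
    apply stepsOf_congr
    intro i hi
    simp only [hσN]
    rw [if_neg (by omega)]
    congr 1
    omega
  have hFn : ∀ n k, M.follow M.init (stepsOf (σN n) ((e + n * p₁ + c) + k))
      = M.follow q₂ (l2.take (k % p₂)) := by
    intro n k
    rw [show e + n * p₁ + c + k = (e + n * p₁) + (c + k) by ring, hEn, hτ, hcdef,
      follow_listSpine_add, hconn, M.follow_stepsOf_cyc q₂ l2 hloop2.1 hloop2.2]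
  -- every spine state of σN n avoids the sink
  have hnbF : ∀ n m, some (M.follow M.init (stepsOf (σN n) m)) ≠ bot := by
    intro n m hbb
    have h1 : M.follow M.init (stepsOf (σN n) (e + n * p₁ + c + m * p₂)) = q₂ := by
      rw [hFn, Nat.mul_mod_left, List.take_zero, follow_nil]
    have hle : m ≤ e + n * p₁ + c + m * p₂ := by
      have : m ≤ m * p₂ := Nat.le_mul_of_pos_right m hp₂
      omega
    obtain ⟨k, hk⟩ := Nat.exists_eq_add_of_le hle
    rw [hk, stepsOf_add, follow_append, hbotfollow _ hbb] at h1
    exact hnb2 (h1 ▸ hbb)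
  -- hence the spines of the approximating trees are safe
  have hsafe : ∀ n m d, d ≠ dirs (σN n) m →
      ∃ u, M.AcceptsFrom (M.next (M.follow M.init (stepsOf (σN n) m)) ((σN n) m).1 d) u := by
    intro n m d _
    rcases htrans (M.follow M.init (stepsOf (σN n) m)) ((σN n) m).1 with h | h
    · exact M.productiveTrans_acceptsFrom h d
    · exfalso
      apply hnbF n (m+1)
      rw [follow_stepsOf_succ]
      rcases M.next_eq_fst_or_snd (M.follow M.init (stepsOf (σN n) m)) ((σN n) m).1
        ((σN n) m).2 with h2 | h2 <;> rw [h2]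
      · exact h.1
      · exact h.2
  -- the approximating trees are accepted
  have haccn : ∀ n, M.mkT (σN n) M.init ∈ M.Lang := by
    intro n
    refine M.mkT_accepts _ _ (hsafe n) ?_
    have hgr := M.isGreatest_IOSet_loop hloop2.1 hloop2.2
      (fun m => M.rank (M.follow M.init (stepsOf (σN n) m))) (e + n * p₁ + c)
      (fun k => by
        have h := hFn n k
        simp only [hp₂def] at h
        exact congrArg M.rank h)
    show Even (sSup (IOSet fun m => M.rank (M.follow M.init (stepsOf (σN n) m))))
    rw [hgr.csSup_eq]
    exact heven2
  -- the limit tree is rejected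
  have hrejI : M.mkT σI M.init ∉ M.Lang := by
    apply M.mkT_not_accepts
    have hgr := M.isGreatest_IOSet_loop hloop1.1 hloop1.2
      (fun m => M.rank (M.follow M.init (stepsOf σI m))) e
      (fun k => by
        have h := hBI k
        simp only [hp₁def] at h
        exact congrArg M.rank h)
    show ¬ Even (sSup (IOSet fun m => M.rank (M.follow M.init (stepsOf σI m))))
    rw [hgr.csSup_eq]
    exact hodd1
  -- convergence
  have hconv : ∀ v : List Bool, ∀ n, v.length + 1 ≤ n →
      M.mkT (σN n) M.init v = M.mkT σI M.init v := by
    intro v n hn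
    apply M.mkT_congr v (e + n * p₁)
    · have : n ≤ n * p₁ := Nat.le_mul_of_pos_right n hp₁
      omega
    · intro i hi
      simp only [hσN]
      rw [if_pos hi]
  have hmem : M.mkT σI M.init ∈ closure M.Lang := by
    apply mem_closure_of_tendsto (f := fun n => M.mkT (σN n) M.init) (b := atTop)
    · rw [tendsto_pi_nhds]
      intro v
      have hev : (fun n => M.mkT (σN n) M.init v) =ᶠ[atTop]
          (fun _ => M.mkT σI M.init v) :=
        Filter.eventually_atTop.2 ⟨v.length + 1, fun n hn => hconv v n hn⟩
      exact Filter.Tendsto.congr' hev.symm tendsto_const_nhds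
    · exact Filter.Eventually.of_forall haccn
  intro hcl
  rw [hcl.closure_eq] at hmem
  exact hrejI hmem
end DPTA

/-- the language of a normalized deterministic tree automaton is closed
iff the automaton contains no weak `(1,2)`-flower. -/
theorem closed_iff_no_weak_12_flower {Alpha Q : Type} [Fintype Alpha] [Nonempty Alpha] [Fintype Q]
    [TopologicalSpace Alpha] [DiscreteTopology Alpha]
    (M : DPTA Alpha Q) (hM : M.Normalized) :
    IsClosed M.Lang ↔ ¬ HasWeakFlower M 1 2 := by
  constructor
  · intro hcl hf
    exact M.not_closed_of_flower hM hf hcl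
  · intro hnf
    exact M.isClosed_of_no_flower hnf
end

section
/- Let A be the deterministic parity tree automaton over Σ = {a, b} with states {q₀, q₁, ⊤}, initial state q₀, ranks rank(q₀) = rank(⊤) = 0 and rank(q₁) = 1, and transitions δ(q₀,a) = (q₀,q₁), δ(q₀,b) = (⊤,⊤), δ(q₁,a) = (q₀,⊤), δ(q₁,b) = (⊤,⊤), δ(⊤,x) = (⊤,⊤) for all x ∈ {a,b}. Then L(A) is Π¹₁-complete: L(A) is Π¹₁ in T_Σ, and every Π¹₁ subset of the Cantor space {0,1}^ℕ Wadge-reduces to L(A). -/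
open Filter

/-- Analytic sets: the empty set and continuous images of the Baire space. -/
def IsAnalytic {X : Type} [TopologicalSpace X] (s : Set X) : Prop :=
  s = ∅ ∨ ∃ f : (ℕ → ℕ) → X, Continuous f ∧ Set.range f = s

/-- `Π¹₁` (coanalytic) sets: complements of analytic sets. -/
def IsPi11 {X : Type} [TopologicalSpace X] (s : Set X) : Prop :=
  IsAnalytic sᶜ

/-- The two-letter alphabet `{a, b}`. -/
inductive Ab16 : Type
  | a | b
  deriving DecidableEq

instance : TopologicalSpace Ab16 := ⊥
instance : DiscreteTopology Ab16 := ⟨rfl⟩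

/-- The states `{q₀, q₁, ⊤}`. -/
inductive St16 : Type
  | q0 | q1 | top
  deriving DecidableEq

/-- The automaton of Statement 16 (`C_{ω^{ω·3}+2}`): `rank q₀ = rank ⊤ = 0`,
`rank q₁ = 1`, `δ(q₀,a) = (q₀,q₁)`, `δ(q₀,b) = (⊤,⊤)`, `δ(q₁,a) = (q₀,⊤)`,
`δ(q₁,b) = (⊤,⊤)`, `δ(⊤,x) = (⊤,⊤)`. -/
def M16 : DPTA Ab16 St16 where
  init := .q0
  delta := fun q s =>
    match q, s with
    | .q0, .a => (.q0, .q1)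
    | .q0, .b => (.top, .top)
    | .q1, .a => (.q0, .top)
    | .q1, .b => (.top, .top)
    | .top, _ => (.top, .top)
  rank := fun q =>
    match q with
    | .q1 => 1
    | _ => 0

namespace M16aux

open DPTA Filter

abbrev T := List Bool → Ab16

lemma runFrom_snoc {Alpha Q : Type} (M : DPTA Alpha Q) (q : Q) (t : List Bool → Alpha)
    (v : List Bool) (d : Bool) :
    M.runFrom q t (v ++ [d]) = M.next (M.runFrom q t v) (t v) d := by
  induction v generalizing q t with
  | nil => rfl
  | cons e v ih => simp [DPTA.runFrom, ih]

lemma pref_zero (π : ℕ → Bool) : pref π 0 = [] := rfl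

lemma pref_succ (π : ℕ → Bool) (n : ℕ) : pref π (n+1) = pref π n ++ [π n] := by
  unfold DPTA.pref
  rw [List.ofFn_succ']
  simp [List.concat_eq_append]

@[simp] lemma pref_length (π : ℕ → Bool) (n : ℕ) : (pref π n).length = n := by
  simp [DPTA.pref]

/-- state of the run of M16 on t along path π after n steps -/
def st (t : T) (π : ℕ → Bool) (n : ℕ) : St16 := M16.run t (pref π n)

@[simp] lemma st_zero (t : T) (π : ℕ → Bool) : st t π 0 = .q0 := rfl

lemma st_succ (t : T) (π : ℕ → Bool) (n : ℕ) :
    st t π (n+1) = M16.next (st t π n) (t (pref π n)) (π n) := by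
  unfold st DPTA.run
  rw [pref_succ, runFrom_snoc]

@[simp] lemma next_top (s : Ab16) (d : Bool) : M16.next .top s d = .top := by
  cases s <;> cases d <;> rfl
@[simp] lemma next_b (q : St16) (d : Bool) : M16.next q .b d = .top := by
  cases q <;> cases d <;> rfl
@[simp] lemma next_q0_a_false : M16.next .q0 .a false = .q0 := rfl
@[simp] lemma next_q0_a_true : M16.next .q0 .a true = .q1 := rfl
@[simp] lemma next_q1_a_false : M16.next .q1 .a false = .q0 := rfl
@[simp] lemma next_q1_a_true : M16.next .q1 .a true = .top := rfl

lemma rank_le_one (q : St16) : M16.rank q ≤ 1 := by cases q <;> simp [M16]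

lemma rank_eq_one_iff (q : St16) : M16.rank q = 1 ↔ q = .q1 := by
  cases q <;> simp [M16]

lemma parityAccept_iff (f : ℕ → ℕ) (hf : ∀ n, f n ≤ 1) :
    DPTA.ParityAccept f ↔ ¬ (∃ᶠ n in atTop, f n = 1) := by
  unfold DPTA.ParityAccept
  have hbdd : BddAbove {r : ℕ | ∃ᶠ n in atTop, f n = r} := by
    refine ⟨1, fun r hr => ?_⟩
    obtain ⟨n, hn⟩ := hr.exists
    exact hn ▸ hf n
  by_cases h : ∃ᶠ n in atTop, f n = 1
  · have hsup : sSup {r : ℕ | ∃ᶠ n in atTop, f n = r} = 1 := by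
      apply le_antisymm
      · refine csSup_le ⟨1, h⟩ fun r hr => ?_
        obtain ⟨n, hn⟩ := hr.exists
        exact hn ▸ hf n
      · exact le_csSup hbdd h
    simp [hsup, h, Nat.even_iff]
  · have hev : ∀ᶠ n in atTop, f n = 0 := by
      filter_upwards [not_frequently.mp h] with n hn
      have := hf n; omega
    have hset : {r : ℕ | ∃ᶠ n in atTop, f n = r} = {0} := by
      ext r
      constructor
      · intro hr
        obtain ⟨n, hnr, hn0⟩ := (hr.and_eventually hev).exists
        simp [← hnr, hn0]
      · rintro rfl
        exact hev.frequently
    simp [hset, h]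

/-- the "rejecting witness" condition -/
def Bad (t : T) : Prop :=
  ∃ π : ℕ → Bool, (∀ n, t (pref π n) = Ab16.a) ∧
    (∀ n, ¬(π n = true ∧ π (n+1) = true)) ∧
    (∀ N, ∃ n, N ≤ n ∧ π n = true)

lemma st_top_mono (t : T) (π : ℕ → Bool) {n : ℕ} (h : st t π n = .top) :
    ∀ m, n ≤ m → st t π m = .top := by
  intro m hm
  induction m, hm using Nat.le_induction with
  | base => exact h
  | succ k hk ih => rw [st_succ, ih, next_top]

lemma mem_lang_iff (t : T) : t ∈ M16.Lang ↔ ¬ Bad t := by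
  constructor
  · -- accept → ¬Bad ; contrapositive: Bad → reject
    intro hacc hbad
    obtain ⟨π, hlab, h11, hinf⟩ := hbad
    have hst : ∀ n, st t π n = .q0 ∨ (st t π n = .q1 ∧ ∃ m, n = m + 1 ∧ π m = true) := by
      intro n
      induction n with
      | zero => left; rfl
      | succ k ih =>
        rcases ih with hq0 | ⟨hq1, m, hm, hπm⟩
        · rw [st_succ, hq0, hlab]
          cases hπk : π k
          · left; rfl
          · right; exact ⟨rfl, k, rfl, hπk⟩
        · have hfalse : π k = false := by
            subst hm
            by_contra hc
            exact h11 m ⟨hπm, by simpa using hc⟩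
          rw [st_succ, hq1, hlab, hfalse]
          left; rfl
    have hq1step : ∀ n, π n = true → st t π (n+1) = .q1 := by
      intro n hn
      rcases hst n with hq0 | ⟨hq1, m, hm, hπm⟩
      · rw [st_succ, hq0, hlab, hn, next_q0_a_true]
      · exfalso
        subst hm
        exact h11 m ⟨hπm, hn⟩
    have hfreq : ∃ᶠ n in atTop, M16.rank (st t π n) = 1 := by
      rw [Filter.frequently_atTop]
      intro N
      obtain ⟨n, hNn, hπn⟩ := hinf N
      exact ⟨n+1, by omega, by rw [hq1step n hπn]; rfl⟩
    have := hacc π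
    rw [parityAccept_iff _ (fun n => rank_le_one _)] at this
    exact this hfreq
  · -- ¬Bad → accept ; contrapositive: reject → Bad
    intro hnbad π
    by_contra hrej
    apply hnbad
    rw [parityAccept_iff _ (fun n => rank_le_one _), not_not] at hrej
    have hfreq : ∃ᶠ n in atTop, st t π n = .q1 := by
      apply hrej.mono
      intro n hn
      exact (rank_eq_one_iff _).mp hn
    have hnotop : ∀ n, st t π n ≠ .top := by
      intro n hn
      obtain ⟨m, hm, hq1⟩ := Filter.frequently_atTop.mp hfreq n
      rw [st_top_mono t π hn m hm] at hq1
      exact St16.noConfusion hq1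
    have hlab : ∀ n, t (pref π n) = Ab16.a := by
      intro n
      cases hl : t (pref π n)
      · rfl
      · exfalso
        apply hnotop (n+1)
        rw [st_succ, hl, next_b]
    have h11 : ∀ n, ¬(π n = true ∧ π (n+1) = true) := by
      rintro n ⟨h1, h2⟩
      have hn := hnotop n
      cases hq : st t π n with
      | top => exact hn hq
      | q1 =>
        apply hnotop (n+1)
        rw [st_succ, hq, hlab, h1, next_q1_a_true]
      | q0 =>
        apply hnotop (n+2)
        have : st t π (n+1) = .q1 := by rw [st_succ, hq, hlab, h1, next_q0_a_true]
        rw [st_succ, this, hlab, h2, next_q1_a_true]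
    refine ⟨π, hlab, h11, ?_⟩
    intro N
    obtain ⟨m, hm, hq1⟩ := Filter.frequently_atTop.mp hfreq (N+1)
    obtain ⟨n, rfl⟩ : ∃ n, m = n + 1 := by
      cases m with
      | zero => exact absurd hq1 (by simp)
      | succ n => exact ⟨n, rfl⟩
    refine ⟨n, by omega, ?_⟩
    rcases hπ : π n with _ | _
    · exfalso
      rw [st_succ, hπ] at hq1
      have hn := hnotop n
      cases hq : st t π n <;> rw [hq] at hq1 <;> rw [hlab] at hq1 <;> simp_all
    · rfl

end M16aux

namespace M16aux

open DPTA Filter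

@[simp] lemma pref_getElem (π : ℕ → Bool) (n i : ℕ) (h : i < (pref π n).length) :
    (pref π n)[i] = π i := by
  simp [DPTA.pref]

/-- the code of one block -/
def blk (m : ℕ) : List Bool := List.replicate m false ++ [true, false]

@[simp] lemma blk_length (m : ℕ) : (blk m).length = m + 2 := by simp [blk]

/-- code of the first `k` blocks -/
def blockList (n : ℕ → ℕ) (k : ℕ) : List Bool := (List.range k).flatMap fun i => blk (n i)

@[simp] lemma blockList_zero (n : ℕ → ℕ) : blockList n 0 = [] := rfl

lemma blockList_succ (n : ℕ → ℕ) (k : ℕ) :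
    blockList n (k+1) = blockList n k ++ blk (n k) := by
  unfold blockList
  rw [List.range_succ, List.flatMap_append]
  simp

lemma blockList_length_ge (n : ℕ → ℕ) (k : ℕ) : 2 * k ≤ (blockList n k).length := by
  induction k with
  | zero => simp
  | succ j ih =>
    rw [blockList_succ]
    simp only [List.length_append, blk_length]
    omega

lemma blockList_prefix (n : ℕ → ℕ) {k j : ℕ} (h : k ≤ j) :
    blockList n k <+: blockList n j := by
  induction j, h using Nat.le_induction with
  | base => exact List.prefix_refl _
  | succ m hm ih =>
    rw [blockList_succ]
    exact ih.trans (List.prefix_append _ _)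

/-- the infinite code path determined by block lengths `n` -/
def codePath (n : ℕ → ℕ) (m : ℕ) : Bool := (blockList n (m+1)).getD m false

lemma lt_length_blockList (n : ℕ → ℕ) (m : ℕ) : m < (blockList n (m+1)).length :=
  lt_of_lt_of_le (by omega) (blockList_length_ge n (m+1))

lemma codePath_eq (n : ℕ → ℕ) (k m : ℕ) (h : m < (blockList n k).length) :
    codePath n m = (blockList n k)[m] := by
  unfold codePath
  rw [List.getD_eq_getElem _ _ (lt_length_blockList n m)]
  rcases le_total k (m+1) with hk | hk
  · exact ((blockList_prefix n hk).getElem h).symm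
  · exact (blockList_prefix n hk).getElem (lt_length_blockList n m)

lemma pref_codePath (n : ℕ → ℕ) (k m : ℕ) (h : m ≤ (blockList n k).length) :
    pref (codePath n) m = (blockList n k).take m := by
  apply List.ext_getElem (by simp; omega)
  intro i h1 h2
  rw [pref_getElem, List.getElem_take]
  exact codePath_eq n k i (by simp at h1 h2 ⊢; omega)

/-- "no two consecutive trues" relation -/
def R2 : Bool → Bool → Prop := fun x y => ¬(x = true ∧ y = true)

lemma chain_blk (m : ℕ) : List.IsChain R2 (blk m) := by
  induction m with
  | zero => simp [blk, List.isChain_pair, R2]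
  | succ j ih =>
    have : blk (j+1) = false :: blk j := by simp [blk, List.replicate_succ]
    rw [this]
    apply List.IsChain.cons ih
    intro y hy
    simp [R2]

lemma blk_getLast (m : ℕ) : (blk m).getLast? = some false := by
  unfold blk
  rw [List.getLast?_append]
  rfl

lemma chain_blockList (n : ℕ → ℕ) (k : ℕ) : List.IsChain R2 (blockList n k) := by
  induction k with
  | zero => simp
  | succ j ih =>
    rw [blockList_succ, List.isChain_append]
    refine ⟨ih, chain_blk _, ?_⟩
    intro x hx y hy
    have : blockList n j = [] ∨ (blockList n j).getLast? = some false := by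
      cases j with
      | zero => left; rfl
      | succ i =>
        right
        rw [blockList_succ, List.getLast?_append, blk_getLast]
        rfl
    rcases this with h | h
    · rw [h] at hx; simp at hx
    · rw [h] at hx
      simp at hx
      simp [R2, hx]

lemma codePath_no11 (n : ℕ → ℕ) (m : ℕ) :
    ¬(codePath n m = true ∧ codePath n (m+1) = true) := by
  rintro ⟨h1, h2⟩
  have hm1 : m + 1 < (blockList n (m+2)).length :=
    lt_of_lt_of_le (by omega) (blockList_length_ge n (m+2))
  have hm : m < (blockList n (m+2)).length := by omega
  rw [codePath_eq n (m+2) m hm] at h1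
  rw [codePath_eq n (m+2) (m+1) hm1] at h2
  have := List.isChain_iff_getElem.mp (chain_blockList n (m+2)) m (by omega)
  exact this ⟨h1, h2⟩

lemma codePath_true (n : ℕ → ℕ) (k : ℕ) :
    codePath n ((blockList n k).length + n k) = true := by
  have h : (blockList n k).length + n k < (blockList n (k+1)).length := by
    rw [blockList_succ]; simp only [List.length_append, blk_length]; omega
  rw [codePath_eq n (k+1) _ h]
  rw [List.getElem_of_eq (blockList_succ n k)]
  rw [List.getElem_append_right (by omega)]
  simp only [Nat.add_sub_cancel_left]
  unfold blk
  rw [List.getElem_append_right (by simp)]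
  simp

lemma codePath_inf (n : ℕ → ℕ) (N : ℕ) : ∃ m, N ≤ m ∧ codePath n m = true := by
  refine ⟨(blockList n N).length + n N, ?_, codePath_true n N⟩
  have := blockList_length_ge n N
  omega

/-- appending bits matching π extends a prefix -/
lemma pref_append (π : ℕ → Bool) (a : ℕ) (w : List Bool)
    (hw : ∀ i (h : i < w.length), w[i] = π (a + i)) :
    pref π (a + w.length) = pref π a ++ w := by
  apply List.ext_getElem (by simp)
  intro i h1 h2
  have hi : i < a + w.length := by simpa using h1
  rw [pref_getElem]
  rcases Nat.lt_or_ge i a with h | h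
  · rw [List.getElem_append_left (by simpa using h), pref_getElem]
  · have hlen : (pref π a).length ≤ i := by simpa using h
    rw [List.getElem_append_right hlen, hw _ (by simp only [pref_length]; omega)]
    congr 1
    simp only [pref_length]
    omega

section extraction

variable (π : ℕ → Bool) (hinf : ∀ N, ∃ m, N ≤ m ∧ π m = true)

/-- the first true position `≥ N` -/
def findTrue (N : ℕ) : ℕ := Nat.find (hinf N)

lemma findTrue_ge (N : ℕ) : N ≤ findTrue π hinf N := (Nat.find_spec (hinf N)).1
lemma findTrue_true (N : ℕ) : π (findTrue π hinf N) = true := (Nat.find_spec (hinf N)).2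
lemma findTrue_min (N j : ℕ) (h1 : N ≤ j) (h2 : j < findTrue π hinf N) : π j = false := by
  have := Nat.find_min (hinf N) h2
  simp only [not_and] at this
  exact Bool.eq_false_iff.mpr (fun hc => (this h1) hc)

/-- the end positions of the blocks of π -/
def eSeq : ℕ → ℕ
  | 0 => 0
  | k+1 => findTrue π hinf (eSeq k) + 2

/-- the block lengths of π -/
def gapSeq (k : ℕ) : ℕ := findTrue π hinf (eSeq π hinf k) - eSeq π hinf k

lemma blockList_eq_pref (h11 : ∀ m, ¬(π m = true ∧ π (m+1) = true)) (k : ℕ) :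
    blockList (gapSeq π hinf) k = pref π (eSeq π hinf k) ∧
    (blockList (gapSeq π hinf) k).length = eSeq π hinf k := by
  induction k with
  | zero => exact ⟨rfl, rfl⟩
  | succ j ih =>
    obtain ⟨ihe, ihl⟩ := ih
    set e := eSeq π hinf j with he
    set p := findTrue π hinf e with hp
    have hep : e ≤ p := findTrue_ge π hinf e
    have hg : gapSeq π hinf j = p - e := rfl
    have hblen : (blk (gapSeq π hinf j)).length = (p - e) + 2 := by rw [hg]; simp
    have key : pref π (e + (blk (p - e)).length) = pref π e ++ blk (p - e) := by
      apply pref_append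
      intro i hi
      simp only [blk_length] at hi
      show (List.replicate (p - e) false ++ [true, false])[i]'(by simp; omega) = π (e + i)
      rcases Nat.lt_or_ge i (p - e) with h | h
      · rw [List.getElem_append_left (by simpa using h)]
        simp only [List.getElem_replicate]
        exact (findTrue_min π hinf e (e+i) (by omega) (by omega)).symm
      · rw [List.getElem_append_right (by simpa using h)]
        have : i = p - e ∨ i = p - e + 1 := by omega
        rcases this with h' | h'
        · subst h'
          simp only [List.length_replicate, Nat.sub_self, List.getElem_cons_zero]
          have : e + (p - e) = p := by omega
          rw [this]
          exact (findTrue_true π hinf e).symm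
        · subst h'
          have h2 : p - e + 1 - (p - e) = 1 := by omega
          simp only [List.length_replicate]
          simp only [h2]
          simp only [List.getElem_cons_succ, List.getElem_cons_zero]
          have hpe : e + (p - e + 1) = p + 1 := by omega
          rw [hpe]
          cases hc : π (p + 1)
          · rfl
          · exact absurd ⟨findTrue_true π hinf e, hc⟩ (h11 p)
    constructor
    · have he1 : eSeq π hinf (j+1) = e + (blk (p - e)).length := by
        show findTrue π hinf e + 2 = _
        simp only [blk_length]
        omega
      rw [blockList_succ, ihe, hg, he1, key]
    · rw [blockList_succ]
      simp only [List.length_append, ihl, hblen]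
      show e + (p - e + 2) = eSeq π hinf (j+1)
      show e + (p - e + 2) = findTrue π hinf e + 2
      omega

end extraction

lemma exists_codePath (π : ℕ → Bool) (h11 : ∀ m, ¬(π m = true ∧ π (m+1) = true))
    (hinf : ∀ N, ∃ m, N ≤ m ∧ π m = true) :
    ∃ n : ℕ → ℕ, π = codePath n := by
  refine ⟨gapSeq π hinf, ?_⟩
  funext m
  have hlt : m < (blockList (gapSeq π hinf) (m+1)).length := lt_length_blockList _ m
  rw [codePath_eq _ (m+1) m hlt]
  obtain ⟨he, hl⟩ := blockList_eq_pref π hinf h11 (m+1)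
  rw [List.getElem_of_eq he, pref_getElem]

end M16aux

namespace M16aux

open DPTA Filter

/-- `v` lies on the code path of `n` -/
def OnPath (n : ℕ → ℕ) (v : List Bool) : Prop := v <+: blockList n v.length

lemma onPath_iff (n : ℕ → ℕ) (v : List Bool) :
    OnPath n v ↔ v = pref (codePath n) v.length := by
  have hlen : v.length ≤ (blockList n v.length).length :=
    le_trans (by omega) (blockList_length_ge n v.length)
  unfold OnPath
  rw [List.prefix_iff_eq_take, pref_codePath n v.length v.length hlen]

lemma onPath_pref (n : ℕ → ℕ) (m : ℕ) : OnPath n (pref (codePath n) m) := by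
  rw [onPath_iff]
  simp

/-- continuity of maps depending on finitely many coordinates -/
lemma continuous_of_finDep {A Y : Type} [TopologicalSpace A] [DiscreteTopology A]
    [TopologicalSpace Y] [DiscreteTopology Y] (g : (ℕ → A) → Y) (N : ℕ) (d : A)
    (hN : ∀ x y : ℕ → A, (∀ i, i < N → x i = y i) → g x = g y) : Continuous g := by
  have hg : g = (fun u : Fin N → A => g (fun i => if h : i < N then u ⟨i, h⟩ else d)) ∘
      (fun x (i : Fin N) => x (i : ℕ)) := by
    funext x
    simp only [Function.comp]
    apply hN
    intro i hi
    simp [hi]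
  rw [hg]
  exact continuous_of_discreteTopology.comp (continuous_pi fun i => continuous_apply _)

noncomputable def decLab (x : ℕ → ℕ) (v : List Bool) : Ab16 :=
  if x (2 * Encodable.encode v) = 0 then Ab16.a else Ab16.b

def npart (x : ℕ → ℕ) (i : ℕ) : ℕ := x (2 * i + 1)

open Classical in
noncomputable def hFun (x : ℕ → ℕ) (v : List Bool) : Ab16 :=
  if OnPath (npart x) v then Ab16.a else decLab x v

lemma hFun_not_mem (x : ℕ → ℕ) : hFun x ∉ M16.Lang := by
  rw [mem_lang_iff, not_not]
  refine ⟨codePath (npart x), ?_, codePath_no11 (npart x), codePath_inf (npart x)⟩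
  intro m
  unfold hFun
  rw [if_pos]
  exact onPath_pref (npart x) m

lemma hFun_range : Set.range hFun = M16.Langᶜ := by
  apply Set.eq_of_subset_of_subset
  · rintro t ⟨x, rfl⟩
    exact hFun_not_mem x
  · intro t ht
    rw [Set.mem_compl_iff, mem_lang_iff, not_not] at ht
    obtain ⟨π, hlab, h11, hinf⟩ := ht
    obtain ⟨n, hn⟩ := exists_codePath π h11 hinf
    classical
    refine ⟨fun j => if j % 2 = 1 then n (j / 2) else
      (match Encodable.decode (α := List Bool) (j / 2) with
        | some v => if t v = Ab16.a then 0 else 1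
        | none => 0), ?_⟩
    set x : ℕ → ℕ := fun j => if j % 2 = 1 then n (j / 2) else
      (match Encodable.decode (α := List Bool) (j / 2) with
        | some v => if t v = Ab16.a then 0 else 1
        | none => 0) with hx
    have hnp : npart x = n := by
      funext i
      simp [npart, hx, Nat.mul_add_mod]
      congr 1
      omega
    have hdl : ∀ v, decLab x v = t v := by
      intro v
      unfold decLab
      have h2 : (2 * Encodable.encode v) % 2 = 0 := by omega
      have h3 : (2 * Encodable.encode v) / 2 = Encodable.encode v := by omega
      rw [hx]
      simp only [h2, h3]
      norm_num
      cases hv : t v <;> simp [hv]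
    funext v
    unfold hFun
    rw [hnp]
    by_cases hOP : OnPath n v
    · rw [if_pos hOP]
      rw [onPath_iff] at hOP
      rw [hOP, ← hn]
      exact (hlab v.length).symm
    · rw [if_neg hOP]
      exact hdl v

lemma blockList_congr {n n' : ℕ → ℕ} (k : ℕ) (h : ∀ i, i < k → n i = n' i) :
    blockList n k = blockList n' k := by
  induction k with
  | zero => rfl
  | succ j ih =>
    rw [blockList_succ, blockList_succ, ih (fun i hi => h i (by omega)), h j (by omega)]

lemma continuous_hFun : Continuous hFun := by
  apply continuous_pi
  intro v
  classical
  apply continuous_of_finDep _ (2 * Encodable.encode v + 2 * v.length + 1) 0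
  intro x y hxy
  have hbl : blockList (npart x) v.length = blockList (npart y) v.length := by
    apply blockList_congr
    intro i hi
    unfold npart
    exact hxy _ (by omega)
  have hOP : OnPath (npart x) v ↔ OnPath (npart y) v := by
    unfold OnPath
    rw [hbl]
  have hdl : decLab x v = decLab y v := by
    unfold decLab
    rw [hxy _ (by omega)]
  unfold hFun
  by_cases h : OnPath (npart x) v
  · rw [if_pos h, if_pos (hOP.mp h)]
  · rw [if_neg h, if_neg (fun hc => h (hOP.mpr hc))]
    exact hdl

lemma isPi11_lang : IsPi11 M16.Lang := by
  unfold IsPi11 IsAnalytic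
  right
  exact ⟨hFun, continuous_hFun, hFun_range⟩

end M16aux

namespace M16aux

open DPTA Filter

/-- decode the completed blocks of a node -/
def decB : List Bool → ℕ → List ℕ
  | [], _ => []
  | true :: [], c => [c]
  | false :: v, c => decB v (c+1)
  | true :: _ :: v, c => c :: decB v 0

lemma decB_replicate_append (m : ℕ) (v : List Bool) (c : ℕ) :
    decB (List.replicate m false ++ v) c = decB v (c + m) := by
  induction m generalizing c with
  | zero => simp [decB]
  | succ j ih =>
    rw [List.replicate_succ, List.cons_append]
    show decB _ (c+1) = _
    rw [ih (c+1)]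
    congr 1
    omega

lemma decB_blk_append (m : ℕ) (v : List Bool) (c : ℕ) :
    decB (blk m ++ v) c = (c + m) :: decB v 0 := by
  unfold blk
  rw [List.append_assoc, decB_replicate_append]
  rfl

lemma decB_blockList_append (n : ℕ → ℕ) (k : ℕ) (v : List Bool) :
    decB (blockList n k ++ v) 0 = (List.range k).map n ++ decB v 0 := by
  induction k generalizing v with
  | zero => simp
  | succ j ih =>
    rw [blockList_succ, List.append_assoc, ih, decB_blk_append]
    rw [List.range_succ]
    simp

lemma decB_blockList (n : ℕ → ℕ) (k : ℕ) :
    decB (blockList n k) 0 = (List.range k).map n := by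
  have := decB_blockList_append n k []
  simpa [decB] using this

lemma decB_prefix_blk (j : ℕ) (w : List Bool) (c : ℕ) (h : w <+: blk j) :
    decB w c = [] ∨ decB w c = [c + j] := by
  induction j generalizing w c with
  | zero =>
    -- blk 0 = [true, false]
    rcases List.prefix_cons_iff.mp h with rfl | ⟨t, rfl, ht⟩
    · left; rfl
    · rcases List.prefix_cons_iff.mp ht with rfl | ⟨u, rfl, hu⟩
      · right; rfl
      · rw [List.prefix_nil.mp hu]
        right; rfl
  | succ i ih =>
    have hb : blk (i+1) = false :: blk i := by simp [blk, List.replicate_succ]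
    rw [hb] at h
    rcases List.prefix_cons_iff.mp h with rfl | ⟨t, rfl, ht⟩
    · left; rfl
    · show decB t (c+1) = [] ∨ decB t (c+1) = [c + (i+1)]
      rcases ih t (c+1) ht with h | h
      · left; exact h
      · right
        rw [h]
        have hc : c + 1 + i = c + (i+1) := by omega
        rw [hc]

lemma decB_prefix (n : ℕ → ℕ) (m : ℕ) (v : List Bool) (hv : v <+: blockList n m) :
    ∃ k, decB v 0 = (List.range k).map n := by
  induction m generalizing v with
  | zero =>
    rw [List.prefix_nil.mp hv]
    exact ⟨0, rfl⟩
  | succ j ih =>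
    rw [blockList_succ] at hv
    rcases Nat.le_total v.length (blockList n j).length with hl | hl
    · apply ih
      rw [List.prefix_iff_eq_take] at hv ⊢
      rw [List.take_append_of_le_length hl] at hv
      exact hv
    · have hpre : blockList n j <+: v :=
        List.prefix_of_prefix_length_le (List.prefix_append _ _) hv hl
      obtain ⟨w, rfl⟩ := hpre
      have hw : w <+: blk (n j) := (List.prefix_append_right_inj _).mp hv
      rw [decB_blockList_append]
      rcases decB_prefix_blk (n j) w 0 hw with h | h
      · rw [h]
        exact ⟨j, by simp⟩
      · rw [h]
        refine ⟨j + 1, ?_⟩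
        rw [List.range_succ]
        simp

end M16aux

namespace M16aux

open DPTA Filter

/-- `s` is in the tree of attempts for `x` (w.r.t. `g`) -/
def Tmem (g : (ℕ → ℕ) → (ℕ → Bool)) (x : ℕ → Bool) (s : List ℕ) : Prop :=
  ∃ y : ℕ → ℕ, (∀ i, i < s.length → y i = s.getD i 0) ∧ (∀ m, m < s.length → g y m = x m)

open Classical in
/-- the reduction map -/
noncomputable def phiFun (g : (ℕ → ℕ) → (ℕ → Bool)) (x : ℕ → Bool) (v : List Bool) : Ab16 :=
  if Tmem g x (decB v 0) then Ab16.a else Ab16.b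

lemma continuous_phiFun (g : (ℕ → ℕ) → (ℕ → Bool)) : Continuous (phiFun g) := by
  apply continuous_pi
  intro v
  classical
  apply continuous_of_finDep _ (decB v 0).length false
  intro x y hxy
  have hT : Tmem g x (decB v 0) ↔ Tmem g y (decB v 0) := by
    constructor <;> rintro ⟨z, hz1, hz2⟩ <;> refine ⟨z, hz1, fun m hm => ?_⟩
    · rw [hz2 m hm]; exact hxy m hm
    · rw [hz2 m hm]; exact (hxy m hm).symm
  unfold phiFun
  by_cases h : Tmem g x (decB v 0)
  · rw [if_pos h, if_pos (hT.mp h)]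
  · rw [if_neg h, if_neg (fun hc => h (hT.mpr hc))]

lemma map_range_getD (n : ℕ → ℕ) (k i : ℕ) (h : i < k) :
    ((List.range k).map n).getD i 0 = n i := by
  have hl : i < ((List.range k).map n).length := by simpa using h
  rw [List.getD_eq_getElem _ _ hl, List.getElem_map, List.getElem_range]

lemma phi_spec (g : (ℕ → ℕ) → (ℕ → Bool)) (hg : Continuous g) (x : ℕ → Bool) :
    phiFun g x ∉ M16.Lang ↔ ∃ y, g y = x := by
  rw [mem_lang_iff, not_not]
  constructor
  · rintro ⟨π, hlab, h11, hinf⟩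
    obtain ⟨n, rfl⟩ := exists_codePath π h11 hinf
    -- every full block list is in the tree
    have hT : ∀ k, Tmem g x ((List.range (k+1)).map n) := by
      intro k
      have hlen : (blockList n (k+1)).length ≤ (blockList n ((blockList n (k+1)).length)).length := by
        refine le_trans ?_ (blockList_length_ge n _)
        omega
      have hk1 : k + 1 ≤ (blockList n (k+1)).length := by
        have := blockList_length_ge n (k+1); omega
      have hv : blockList n (k+1) = pref (codePath n) (blockList n (k+1)).length := by
        rw [pref_codePath n (blockList n (k+1)).length _ hlen]
        exact List.prefix_iff_eq_take.mp (blockList_prefix n hk1)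
      have hla := hlab (blockList n (k+1)).length
      rw [← hv] at hla
      unfold phiFun at hla
      by_contra hc
      rw [decB_blockList, if_neg hc] at hla
      exact Ab16.noConfusion hla
    choose yk hy1 hy2 using hT
    have hyk : ∀ k i, i < k + 1 → yk k i = n i := by
      intro k i hi
      rw [hy1 k i (by simpa using hi), map_range_getD n (k+1) i hi]
    refine ⟨n, ?_⟩
    have htend : Tendsto yk atTop (nhds n) := by
      rw [tendsto_pi_nhds]
      intro i
      apply Tendsto.congr' _ tendsto_const_nhds
      filter_upwards [eventually_ge_atTop i] with k hk
      exact (hyk k i (by omega)).symm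
    have hgy : Tendsto (fun k => g (yk k)) atTop (nhds (g n)) :=
      (hg.tendsto n).comp htend
    funext m
    have h1 : Tendsto (fun k => g (yk k) m) atTop (nhds (g n m)) :=
      tendsto_pi_nhds.mp hgy m
    have h2 : Tendsto (fun k => g (yk k) m) atTop (nhds (x m)) := by
      apply Tendsto.congr' _ tendsto_const_nhds
      filter_upwards [eventually_ge_atTop m] with k hk
      exact (hy2 k m (by simpa using by omega : m < ((List.range (k+1)).map n).length)).symm
    exact tendsto_nhds_unique h1 h2
  · rintro ⟨y, rfl⟩
    refine ⟨codePath y, ?_, codePath_no11 y, codePath_inf y⟩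
    intro m
    have hlen : m ≤ (blockList y m).length :=
      le_trans (by omega) (blockList_length_ge y m)
    have hpre : pref (codePath y) m <+: blockList y m := by
      rw [pref_codePath y m m hlen]
      exact List.take_prefix m _
    obtain ⟨k, hk⟩ := decB_prefix y m _ hpre
    unfold phiFun
    rw [hk, if_pos]
    exact ⟨y, fun i hi => (map_range_getD y k i (by simpa using hi)).symm,
      fun m' _ => rfl⟩

/-- the all-`b` tree is accepted -/
lemma allB_mem : (fun _ : List Bool => Ab16.b) ∈ M16.Lang := by
  rw [mem_lang_iff]
  rintro ⟨π, hlab, -, -⟩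
  exact Ab16.noConfusion (hlab 0)

end M16aux

/-- `L(M16)` is `Π¹₁`-complete. -/
theorem M16_pi11_complete :
    IsPi11 M16.Lang ∧ ∀ A : Set (ℕ → Bool), IsPi11 A → WadgeLE A M16.Lang := by
  refine ⟨M16aux.isPi11_lang, ?_⟩
  intro A hA
  have hA' : Aᶜ = ∅ ∨ ∃ f : (ℕ → ℕ) → (ℕ → Bool), Continuous f ∧ Set.range f = Aᶜ := hA
  rcases hA' with h | ⟨g, hg, hrange⟩
  · refine ⟨fun _ _ => Ab16.b, continuous_const, ?_⟩
    have hAu : A = Set.univ := by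
      rw [← compl_compl A, h, Set.compl_empty]
    rw [hAu]
    ext x
    simp [M16aux.allB_mem]
  · refine ⟨M16aux.phiFun g, M16aux.continuous_phiFun g, ?_⟩
    ext x
    constructor
    · intro hx
      have hnx : x ∉ Set.range g := by
        rw [hrange]
        exact fun hc => hc hx
      show M16aux.phiFun g x ∈ M16.Lang
      by_contra hc
      exact hnx ((M16aux.phi_spec g hg x).mp hc)
    · intro hx
      by_contra hxa
      have hxr : x ∈ Set.range g := by
        rw [hrange]
        exact hxa
      exact (M16aux.phi_spec g hg x).mpr hxr hx
end
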